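/- arXiv:1312.4135 — 5 statements merged into one kernel-verified Lean document; each statement's English description precedes it below -/
import Mathlib

section
/- If G is a graph (2-uniform hypergraph) on n vertices whose largest clique has order l, then the maximum of λ(G,x) = Σ_{ij ∈ E(G)} x_i x_j over all nonnegative weight vectors x with Σ x_i = 1 equals (1/2)(1 - 1/l). -/
open Finset

lemma offDiag_sum {α : Type*} [DecidableEq α] (s : Finset α) (x : α → ℝ) :
    ∑ p ∈ s.offDiag, x p.1 * x p.2 = (∑ i ∈ s, x i)^2 - ∑ i ∈ s, (x i)^2 := by
  have h := Finset.sum_union (f := fun p : α × α => x p.1 * x p.2)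
    (Finset.disjoint_diag_offDiag s)
  rw [Finset.diag_union_offDiag] at h
  have h2 : ∑ p ∈ s ×ˢ s, x p.1 * x p.2 = (∑ i ∈ s, x i)^2 := by
    rw [Finset.sum_product, sq, Finset.sum_mul_sum]
  have h3 : ∑ p ∈ s.diag, x p.1 * x p.2 = ∑ i ∈ s, (x i)^2 := by
    rw [Finset.sum_diag]
    exact Finset.sum_congr rfl fun i _ => (sq (x i)).symm
  linarith

lemma pair_offDiag {α : Type*} [DecidableEq α] (a b : α) (hab : a ≠ b) :
    ({a, b} : Finset α).offDiag = {(a, b), (b, a)} := by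
  ext p
  simp only [Finset.mem_offDiag, Finset.mem_insert, Finset.mem_singleton]
  constructor
  · rintro ⟨(h1 | h1), (h2 | h2), h3⟩ <;> simp_all [Prod.ext_iff]
  · rintro (h | h) <;> subst h <;> simp [hab, hab.symm]

lemma edges_le_offDiag {α : Type*} [DecidableEq α] (T : Finset α) (E' : Finset (Finset α))
    (hE' : ∀ e ∈ E', e.card = 2 ∧ e ⊆ T) (x : α → ℝ) (hx : ∀ i, 0 ≤ x i) :
    2 * ∑ e ∈ E', ∏ i ∈ e, x i ≤ ∑ p ∈ T.offDiag, x p.1 * x p.2 := by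
  have key : ∀ e ∈ E', ∑ p ∈ e.offDiag, x p.1 * x p.2 = 2 * ∏ i ∈ e, x i := by
    intro e he
    obtain ⟨a, b, hab, rfl⟩ := Finset.card_eq_two.1 (hE' e he).1
    rw [pair_offDiag a b hab, Finset.sum_insert (by simp [Prod.ext_iff, hab]),
      Finset.sum_singleton, Finset.prod_insert (by simp [hab]), Finset.prod_singleton]
    ring
  have hdisj : (E' : Set (Finset α)).PairwiseDisjoint Finset.offDiag := by
    intro e he e' he' hne
    simp only [Function.onFun, Finset.disjoint_left]
    intro p hp hp'
    apply hne
    have h1 : e = {p.1, p.2} := by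
      refine (Finset.eq_of_subset_of_card_le ?_ ?_).symm
      · intro z hz
        simp only [Finset.mem_insert, Finset.mem_singleton] at hz
        rcases hz with rfl | rfl
        · exact (Finset.mem_offDiag.1 hp).1
        · exact (Finset.mem_offDiag.1 hp).2.1
      · rw [(hE' e he).1, Finset.card_insert_of_notMem (by
          simp [(Finset.mem_offDiag.1 hp).2.2]), Finset.card_singleton]
    have h2 : e' = {p.1, p.2} := by
      refine (Finset.eq_of_subset_of_card_le ?_ ?_).symm
      · intro z hz
        simp only [Finset.mem_insert, Finset.mem_singleton] at hz
        rcases hz with rfl | rfl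
        · exact (Finset.mem_offDiag.1 hp').1
        · exact (Finset.mem_offDiag.1 hp').2.1
      · rw [(hE' e' he').1, Finset.card_insert_of_notMem (by
          simp [(Finset.mem_offDiag.1 hp).2.2]), Finset.card_singleton]
    rw [h1, h2]
  calc 2 * ∑ e ∈ E', ∏ i ∈ e, x i = ∑ e ∈ E', ∑ p ∈ e.offDiag, x p.1 * x p.2 := by
        rw [Finset.mul_sum]
        exact (Finset.sum_congr rfl fun e he => key e he).symm
    _ = ∑ p ∈ E'.biUnion Finset.offDiag, x p.1 * x p.2 := (Finset.sum_biUnion hdisj).symm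
    _ ≤ ∑ p ∈ T.offDiag, x p.1 * x p.2 := by
        apply Finset.sum_le_sum_of_subset_of_nonneg
        · intro p hp
          obtain ⟨e, he, hpe⟩ := Finset.mem_biUnion.1 hp
          have := Finset.mem_offDiag.1 hpe
          exact Finset.mem_offDiag.2 ⟨(hE' e he).2 this.1, (hE' e he).2 this.2.1, this.2.2⟩
        · intro p _ _; exact mul_nonneg (hx _) (hx _)

lemma ms_shift (n : ℕ) (E : Finset (Finset (Fin n))) (hE : ∀ e ∈ E, e.card = 2)
    (x : Fin n → ℝ) (i j : Fin n) (hij : i ≠ j)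
    (hnij : ({i, j} : Finset (Fin n)) ∉ E) (hxj : 0 ≤ x j)
    (hG : ∑ e ∈ E.filter (j ∈ ·), ∏ k ∈ e.erase j, x k ≤
          ∑ e ∈ E.filter (i ∈ ·), ∏ k ∈ e.erase i, x k) :
    ∑ e ∈ E, ∏ k ∈ e, x k ≤
      ∑ e ∈ E, ∏ k ∈ e, (Function.update (Function.update x j 0) i (x i + x j)) k := by
  set y := Function.update (Function.update x j 0) i (x i + x j) with hy
  have hboth : ∀ e ∈ E, i ∈ e → j ∈ e → False := by
    intro e he hi hj
    apply hnij
    have hsub : ({i, j} : Finset (Fin n)) ⊆ e := by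
      intro z hz
      simp only [Finset.mem_insert, Finset.mem_singleton] at hz
      rcases hz with rfl | rfl <;> assumption
    have hc : ({i, j} : Finset (Fin n)).card = 2 := by
      rw [Finset.card_insert_of_notMem (by simp [hij]), Finset.card_singleton]
    have h := Finset.eq_of_subset_of_card_le hsub (by rw [hE e he, hc])
    exact h ▸ he
  have hyi : y i = x i + x j := by simp [hy]
  have hyj : y j = 0 := by simp [hy, Function.update_of_ne (Ne.symm hij), hij]
  have hyk : ∀ k, k ≠ i → k ≠ j → y k = x k := by
    intro k hki hkj
    simp [hy, Function.update_of_ne hki, Function.update_of_ne hkj]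
  have hfj : (E.filter (fun e => i ∉ e)).filter (j ∈ ·) = E.filter (j ∈ ·) := by
    ext e
    simp only [Finset.mem_filter]
    constructor
    · rintro ⟨⟨he, _⟩, hje⟩; exact ⟨he, hje⟩
    · rintro ⟨he, hje⟩
      exact ⟨⟨he, fun hie => hboth e he hie hje⟩, hje⟩
  have split : ∀ z : Fin n → ℝ, ∑ e ∈ E, ∏ k ∈ e, z k
      = z i * (∑ e ∈ E.filter (i ∈ ·), ∏ k ∈ e.erase i, z k)
      + z j * (∑ e ∈ E.filter (j ∈ ·), ∏ k ∈ e.erase j, z k)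
      + ∑ e ∈ (E.filter (fun e => i ∉ e)).filter (fun e => j ∉ e), ∏ k ∈ e, z k := by
    intro z
    rw [← Finset.sum_filter_add_sum_filter_not E (i ∈ ·) (fun e => ∏ k ∈ e, z k)]
    have h1 : ∑ e ∈ E.filter (i ∈ ·), ∏ k ∈ e, z k
        = z i * ∑ e ∈ E.filter (i ∈ ·), ∏ k ∈ e.erase i, z k := by
      rw [Finset.mul_sum]
      refine Finset.sum_congr rfl fun e he => ?_
      exact (Finset.mul_prod_erase e z (Finset.mem_filter.1 he).2).symm
    have h2 : ∑ e ∈ E.filter (fun e => i ∉ e), ∏ k ∈ e, z k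
        = z j * (∑ e ∈ E.filter (j ∈ ·), ∏ k ∈ e.erase j, z k)
        + ∑ e ∈ (E.filter (fun e => i ∉ e)).filter (fun e => j ∉ e), ∏ k ∈ e, z k := by
      rw [← Finset.sum_filter_add_sum_filter_not (E.filter (fun e => i ∉ e)) (j ∈ ·)
        (fun e => ∏ k ∈ e, z k), hfj]
      congr 1
      rw [Finset.mul_sum]
      refine Finset.sum_congr rfl fun e he => ?_
      exact (Finset.mul_prod_erase e z (Finset.mem_filter.1 he).2).symm
    rw [h1, h2]; ring
  have hGi : ∑ e ∈ E.filter (i ∈ ·), ∏ k ∈ e.erase i, y k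
      = ∑ e ∈ E.filter (i ∈ ·), ∏ k ∈ e.erase i, x k := by
    refine Finset.sum_congr rfl fun e he => Finset.prod_congr rfl fun k hk => ?_
    obtain ⟨he, hie⟩ := Finset.mem_filter.1 he
    exact hyk k (Finset.ne_of_mem_erase hk)
      (fun h => hboth e he hie (h ▸ Finset.mem_of_mem_erase hk))
  have hGj : ∑ e ∈ E.filter (j ∈ ·), ∏ k ∈ e.erase j, y k
      = ∑ e ∈ E.filter (j ∈ ·), ∏ k ∈ e.erase j, x k := by
    refine Finset.sum_congr rfl fun e he => Finset.prod_congr rfl fun k hk => ?_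
    obtain ⟨he, hje⟩ := Finset.mem_filter.1 he
    exact hyk k (fun h => hboth e he (h ▸ Finset.mem_of_mem_erase hk) hje)
      (Finset.ne_of_mem_erase hk)
  have hH : ∑ e ∈ (E.filter (fun e => i ∉ e)).filter (fun e => j ∉ e), ∏ k ∈ e, y k
      = ∑ e ∈ (E.filter (fun e => i ∉ e)).filter (fun e => j ∉ e), ∏ k ∈ e, x k := by
    refine Finset.sum_congr rfl fun e he => Finset.prod_congr rfl fun k hk => ?_
    simp only [Finset.mem_filter] at he
    exact hyk k (fun h => he.1.2 (h ▸ hk)) (fun h => he.2 (h ▸ hk))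
  rw [split x, split y, hGi, hGj, hH, hyi, hyj]
  have := mul_le_mul_of_nonneg_left hG hxj
  nlinarith [this]

lemma ms_bound (n l : ℕ) (hl : 0 < l) (E : Finset (Finset (Fin n)))
    (hE : ∀ e ∈ E, e.card = 2)
    (hmax : ∀ s : Finset (Fin n),
      (∀ i ∈ s, ∀ j ∈ s, i ≠ j → ({i, j} : Finset (Fin n)) ∈ E) → s.card ≤ l) :
    ∀ m (x : Fin n → ℝ), (Finset.univ.filter (fun i => x i ≠ 0)).card ≤ m →
      (∀ i, 0 ≤ x i) → (∑ i, x i) = 1 →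
      ∑ e ∈ E, ∏ k ∈ e, x k ≤ (1/2) * (1 - 1/(l:ℝ)) := by
  intro m
  induction m with
  | zero =>
    intro x hcard hx hsum
    exfalso
    have hz : ∀ i, x i = 0 := by
      intro i
      by_contra h
      have hmem : i ∈ Finset.univ.filter (fun i => x i ≠ 0) :=
        Finset.mem_filter.2 ⟨Finset.mem_univ i, h⟩
      have := Finset.card_pos.2 ⟨i, hmem⟩
      omega
    rw [Finset.sum_congr rfl (fun i _ => hz i)] at hsum
    simp at hsum
  | succ m ih =>
    intro x hcard hx hsum
    set T := Finset.univ.filter (fun i => x i ≠ 0) with hT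
    have hsumT : ∑ i ∈ T, x i = 1 := by
      rw [hT, Finset.sum_filter_ne_zero]; exact hsum
    by_cases hcl : ∀ i ∈ T, ∀ j ∈ T, i ≠ j → ({i, j} : Finset (Fin n)) ∈ E
    · -- support is a clique
      have hTl : T.card ≤ l := hmax T hcl
      have hTpos : 0 < T.card := by
        rcases Finset.eq_empty_or_nonempty T with h | h
        · rw [h] at hsumT; simp at hsumT
        · exact Finset.card_pos.2 h
      have hfil : ∑ e ∈ E, ∏ k ∈ e, x k = ∑ e ∈ E.filter (· ⊆ T), ∏ k ∈ e, x k := by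
        rw [Finset.sum_filter_of_ne]
        intro e _ hne k hk
        exact Finset.mem_filter.2 ⟨Finset.mem_univ k,
          fun h0 => hne (Finset.prod_eq_zero hk h0)⟩
      have hb := edges_le_offDiag T (E.filter (· ⊆ T))
        (fun e he => ⟨hE e (Finset.mem_filter.1 he).1, (Finset.mem_filter.1 he).2⟩) x hx
      rw [offDiag_sum, hsumT] at hb
      have hcpos : (0:ℝ) < T.card := by exact_mod_cast hTpos
      have hlpos : (0:ℝ) < l := by exact_mod_cast hl
      have hcs : (1:ℝ) ≤ T.card * ∑ i ∈ T, (x i)^2 := by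
        have h := sq_sum_le_card_mul_sum_sq (s := T) (f := x)
        rw [hsumT] at h
        simpa using h
      have h1 : (1:ℝ)/l ≤ ∑ i ∈ T, (x i)^2 := by
        have hle : (1:ℝ)/T.card ≤ ∑ i ∈ T, (x i)^2 := by
          rw [div_le_iff₀ hcpos]
          linarith [hcs]
        refine le_trans ?_ hle
        apply one_div_le_one_div_of_le hcpos
        exact_mod_cast hTl
      rw [hfil]
      nlinarith [hb, h1]
    · -- support is not a clique: shift weight
      push_neg at hcl
      obtain ⟨i, hi, j, hj, hij, hne⟩ := hcl
      have hxi : x i ≠ 0 := (Finset.mem_filter.1 hi).2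
      have hxj : x j ≠ 0 := (Finset.mem_filter.1 hj).2
      -- helper applying the shift for ordered pair (a, b): move weight from b to a
      have main : ∀ a b : Fin n, a ∈ T → b ∈ T → a ≠ b →
          ({a, b} : Finset (Fin n)) ∉ E →
          (∑ e ∈ E.filter (b ∈ ·), ∏ k ∈ e.erase b, x k ≤
            ∑ e ∈ E.filter (a ∈ ·), ∏ k ∈ e.erase a, x k) →
          ∑ e ∈ E, ∏ k ∈ e, x k ≤ (1/2) * (1 - 1/(l:ℝ)) := by
        intro a b ha hb hab hnab hG
        set y := Function.update (Function.update x b 0) a (x a + x b) with hy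
        have hya : y a = x a + x b := by simp [hy]
        have hyb : y b = 0 := by
          simp [hy, Function.update_of_ne (Ne.symm hab), hab]
        have hyk : ∀ k, k ≠ a → k ≠ b → y k = x k := by
          intro k hka hkb
          simp [hy, Function.update_of_ne hka, Function.update_of_ne hkb]
        have hynn : ∀ k, 0 ≤ y k := by
          intro k
          rcases eq_or_ne k a with rfl | hka
          · rw [hya]; exact add_nonneg (hx _) (hx _)
          rcases eq_or_ne k b with rfl | hkb
          · rw [hyb]
          · rw [hyk k hka hkb]; exact hx k
        have hysum : ∑ k, y k = 1 := by
          have hbu : b ∈ (Finset.univ : Finset (Fin n)).erase a :=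
            Finset.mem_erase.2 ⟨Ne.symm hab, Finset.mem_univ b⟩
          rw [hy, Finset.sum_update_of_mem (Finset.mem_univ a),
            Finset.sdiff_singleton_eq_erase, Finset.sum_update_of_mem hbu,
            Finset.sdiff_singleton_eq_erase]
          have e1 : x a + ∑ k ∈ Finset.univ.erase a, x k = 1 := by
            rw [Finset.add_sum_erase _ x (Finset.mem_univ a)]; exact hsum
          have e2 : x b + ∑ k ∈ (Finset.univ.erase a).erase b, x k
              = ∑ k ∈ Finset.univ.erase a, x k := by
            rw [Finset.add_sum_erase _ x hbu]
          linarith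
        have hsupp : Finset.univ.filter (fun k => y k ≠ 0) ⊆ T.erase b := by
          intro k hk
          have hk' : y k ≠ 0 := (Finset.mem_filter.1 hk).2
          have hkb : k ≠ b := by rintro rfl; exact hk' hyb
          refine Finset.mem_erase.2 ⟨hkb, ?_⟩
          rcases eq_or_ne k a with rfl | hka
          · exact ha
          · rw [hT]
            refine Finset.mem_filter.2 ⟨Finset.mem_univ k, ?_⟩
            rw [← hyk k hka hkb]; exact hk'
        have hycard : (Finset.univ.filter (fun k => y k ≠ 0)).card ≤ m := by
          have h1 := Finset.card_le_card hsupp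
          have h2 : (T.erase b).card = T.card - 1 := Finset.card_erase_of_mem hb
          have h3 : 0 < T.card := Finset.card_pos.2 ⟨b, hb⟩
          omega
        calc ∑ e ∈ E, ∏ k ∈ e, x k ≤ ∑ e ∈ E, ∏ k ∈ e, y k :=
              ms_shift n E hE x a b hab hnab (hx b) hG
          _ ≤ (1/2) * (1 - 1/(l:ℝ)) := ih y hycard hynn hysum
      rcases le_total (∑ e ∈ E.filter (j ∈ ·), ∏ k ∈ e.erase j, x k)
          (∑ e ∈ E.filter (i ∈ ·), ∏ k ∈ e.erase i, x k) with hG | hG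
      · exact main i j hi hj hij hne hG
      · exact main j i hj hi (Ne.symm hij) (by rwa [Finset.pair_comm]) hG

/-- Motzkin–Straus: for a graph (2-uniform hypergraph) on `n` vertices whose largest
clique has order `l`, the maximum over the standard simplex of
`λ(G,x) = Σ_{ij ∈ E} x_i x_j` equals `(1/2)(1 - 1/l)`. -/
theorem motzkin_straus (n l : ℕ) (hn : 0 < n)
    (E : Finset (Finset (Fin n))) (hE : ∀ e ∈ E, e.card = 2)
    (hclique : ∃ s : Finset (Fin n), s.card = l ∧
      ∀ i ∈ s, ∀ j ∈ s, i ≠ j → ({i, j} : Finset (Fin n)) ∈ E)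
    (hmax : ∀ s : Finset (Fin n),
      (∀ i ∈ s, ∀ j ∈ s, i ≠ j → ({i, j} : Finset (Fin n)) ∈ E) → s.card ≤ l) :
    IsGreatest {v : ℝ | ∃ x : Fin n → ℝ, (∀ i, 0 ≤ x i) ∧ (∑ i, x i) = 1 ∧
      v = ∑ e ∈ E, ∏ i ∈ e, x i} ((1 / 2) * (1 - 1 / l)) := by
  
  have hl : 0 < l := by
    have := hmax {⟨0, hn⟩} (by
      intro i hi j hj hij
      rw [Finset.mem_singleton] at hi hj
      exact absurd (hi.trans hj.symm) hij)
    simp at this; omega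
  have hl0 : (l : ℝ) ≠ 0 := by positivity
  constructor
  · -- membership: uniform weight on a maximum clique
    obtain ⟨s, hscard, hscl⟩ := hclique
    refine ⟨fun k => if k ∈ s then (1 / (l : ℝ)) else 0, ?_, ?_, ?_⟩
    · intro k; dsimp only; split <;> positivity
    · rw [Finset.sum_ite_mem, Finset.univ_inter, Finset.sum_const, hscard,
        nsmul_eq_mul]
      field_simp
    · set x : Fin n → ℝ := fun k => if k ∈ s then (1 / (l : ℝ)) else 0 with hxdef
      have hfil : ∑ e ∈ E, ∏ k ∈ e, x k = ∑ e ∈ E.filter (· ⊆ s), ∏ k ∈ e, x k := by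
        rw [Finset.sum_filter_of_ne]
        intro e _ hne k hk
        by_contra hks
        exact hne (Finset.prod_eq_zero hk (by simp [hxdef, hks]))
      have hpow : E.filter (· ⊆ s) = s.powersetCard 2 := by
        ext e
        rw [Finset.mem_filter, Finset.mem_powersetCard]
        constructor
        · rintro ⟨he, hes⟩; exact ⟨hes, hE e he⟩
        · rintro ⟨hes, hc⟩
          obtain ⟨a, b, hab, rfl⟩ := Finset.card_eq_two.1 hc
          refine ⟨hscl a ?_ b ?_ hab, hes⟩
          · exact hes (by simp)
          · exact hes (by simp)
      have hval : ∀ e ∈ s.powersetCard 2, ∏ k ∈ e, x k = (1 / (l : ℝ))^2 := by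
        intro e he
        obtain ⟨hes, hc⟩ := Finset.mem_powersetCard.1 he
        rw [Finset.prod_congr rfl (fun k hk => ?_), Finset.prod_const, hc]
        simp [hxdef, hes hk]
      rw [hfil, hpow, Finset.sum_congr rfl hval, Finset.sum_const,
        Finset.card_powersetCard, hscard, nsmul_eq_mul, Nat.cast_choose_two]
      have hl1 : (1:ℝ) ≤ (l:ℝ) := by exact_mod_cast hl
      field_simp
  · rintro v ⟨x, hx, hsum, rfl⟩
    exact ms_bound n l hl E hE hmax _ x le_rfl hx hsum
end

section
/- If H is a {1,2}-graph in which the order of a maximum complete {1,2}-subgraph is t (t ≥ 2), then λ'(H) = 2 - 1/t. -/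
open Finset

private lemma two_mul_sum_pairs {α : Type*} [DecidableEq α] (S : Finset α) (x : α → ℝ) :
    2 * ∑ e ∈ S.powersetCard 2, ∏ m ∈ e, x m
      = (∑ i ∈ S, x i) ^ 2 - ∑ i ∈ S, (x i) ^ 2 := by
  induction S using Finset.induction_on with
  | empty => rw [Finset.powersetCard_eq_empty.2 (by simp)]; simp
  | @insert a s ha ih =>
    have hdisj : Disjoint (s.powersetCard 2) ((s.powersetCard 1).image (insert a)) := by
      rw [Finset.disjoint_right]
      intro e he he2
      simp only [mem_image] at he
      obtain ⟨e', he', rfl⟩ := he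
      rw [mem_powersetCard] at he2
      exact ha (he2.1 (mem_insert_self a e'))
    have hinj : ∀ e ∈ s.powersetCard 1, ∀ e' ∈ s.powersetCard 1,
        insert a e = insert a e' → e = e' := by
      intro e he e' he' h
      rw [mem_powersetCard] at he he'
      have hae : a ∉ e := fun h' => ha (he.1 h')
      have hae' : a ∉ e' := fun h' => ha (he'.1 h')
      rw [← Finset.erase_insert hae, ← Finset.erase_insert hae', h]
    rw [show (2:ℕ) = Nat.succ 1 from rfl, powersetCard_succ_insert ha,
      sum_union hdisj, sum_image hinj, powersetCard_one, sum_map]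
    simp only [Function.Embedding.coeFn_mk]
    have h1 : ∀ i ∈ s, ∏ m ∈ insert a {i}, x m = x a * x i := by
      intro i hi
      rw [Finset.prod_insert (by simp; rintro rfl; exact ha hi), Finset.prod_singleton]
    rw [Finset.sum_congr rfl h1, ← Finset.mul_sum, Finset.sum_insert ha, Finset.sum_insert ha]
    nlinarith [ih]

private def shf {n : ℕ} (x : Fin n → ℝ) (i j : Fin n) : Fin n → ℝ :=
  fun k => if k = j then 0 else if k = i then x i + x j else x k

private lemma shf_eq {n : ℕ} (x : Fin n → ℝ) {i j : Fin n} (hij : i ≠ j) (k : Fin n) :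
    shf x i j k = x k + x j * ((if k = i then 1 else 0) - (if k = j then 1 else 0)) := by
  rcases eq_or_ne k j with rfl | hkj
  · simp [shf, Ne.symm hij]
  rcases eq_or_ne k i with rfl | hki
  · simp [shf, hij]
  · simp [shf, hkj, hki]

private lemma shf_sum {n : ℕ} (x : Fin n → ℝ) {i j : Fin n} (hij : i ≠ j)
    (s : Finset (Fin n)) :
    ∑ k ∈ s, shf x i j k
      = ∑ k ∈ s, x k + x j * ((if i ∈ s then (1:ℝ) else 0) - (if j ∈ s then 1 else 0)) := by
  simp_rw [shf_eq x hij]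
  rw [Finset.sum_add_distrib, ← Finset.mul_sum, Finset.sum_sub_distrib,
    Finset.sum_ite_eq' s i (fun _ => (1:ℝ)), Finset.sum_ite_eq' s j (fun _ => (1:ℝ))]

private lemma shift_edge {n : ℕ} (x : Fin n → ℝ) {i j : Fin n} (hij : i ≠ j)
    (e : Finset (Fin n)) (he : e.card = 2) (hnotij : e ≠ {i, j}) :
    ∏ m ∈ e, shf x i j m
      = ∏ m ∈ e, x m + x j * ((if i ∈ e then ∏ m ∈ e.erase i, x m else 0)
          - (if j ∈ e then ∏ m ∈ e.erase j, x m else 0)) := by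
  by_cases hi : i ∈ e <;> by_cases hj : j ∈ e
  · exfalso
    apply hnotij
    have hsub : ({i, j} : Finset (Fin n)) ⊆ e := by
      intro m hm
      simp only [mem_insert, mem_singleton] at hm
      rcases hm with rfl | rfl <;> assumption
    refine (Finset.eq_of_subset_of_card_le hsub ?_).symm
    rw [he, Finset.card_insert_of_notMem (by simp [hij]), Finset.card_singleton]
  · -- i ∈ e, j ∉ e
    have hprod : ∀ m ∈ e.erase i, shf x i j m = x m := by
      intro m hm
      rw [mem_erase] at hm
      have hmj : m ≠ j := fun h => hj (h ▸ hm.2)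
      simp [shf, hm.1, hmj]
    rw [← Finset.mul_prod_erase e _ hi, ← Finset.mul_prod_erase e x hi,
      Finset.prod_congr rfl hprod]
    have : shf x i j i = x i + x j := by simp [shf, hij]
    rw [this, if_pos hi, if_neg hj]
    ring
  · -- j ∈ e, i ∉ e
    have : shf x i j j = 0 := by simp [shf]
    rw [← Finset.mul_prod_erase e _ hj, this, ← Finset.mul_prod_erase e x hj,
      if_neg hi, if_pos hj]
    ring
  · have hprod : ∀ m ∈ e, shf x i j m = x m := by
      intro m hm
      have h1 : m ≠ j := fun h => hj (h ▸ hm)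
      have h2 : m ≠ i := fun h => hi (h ▸ hm)
      simp [shf, h1, h2]
    rw [Finset.prod_congr rfl hprod, if_neg hi, if_neg hj]
    ring

private lemma shift_val {n : ℕ} (E1 : Finset (Fin n)) (E2 : Finset (Finset (Fin n)))
    (hE2 : ∀ e ∈ E2, e.card = 2)
    (x : Fin n → ℝ) {i j : Fin n} (hij : i ≠ j) (hnot : ({i, j} : Finset (Fin n)) ∉ E2) :
    (∑ k ∈ E1, shf x i j k) + 2 * ∑ e ∈ E2, ∏ m ∈ e, shf x i j m
      = (∑ k ∈ E1, x k) + 2 * ∑ e ∈ E2, ∏ m ∈ e, x m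
        + x j * (((if i ∈ E1 then (1:ℝ) else 0)
            + 2 * ∑ e ∈ E2.filter (i ∈ ·), ∏ m ∈ e.erase i, x m)
          - ((if j ∈ E1 then (1:ℝ) else 0)
            + 2 * ∑ e ∈ E2.filter (j ∈ ·), ∏ m ∈ e.erase j, x m)) := by
  have h2 : ∑ e ∈ E2, ∏ m ∈ e, shf x i j m
      = ∑ e ∈ E2, (∏ m ∈ e, x m + x j * ((if i ∈ e then ∏ m ∈ e.erase i, x m else 0)
          - (if j ∈ e then ∏ m ∈ e.erase j, x m else 0))) := by
    refine Finset.sum_congr rfl fun e he => ?_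
    exact shift_edge x hij e (hE2 e he) (fun h => hnot (h ▸ he))
  rw [shf_sum x hij, h2, Finset.sum_add_distrib, ← Finset.mul_sum,
    Finset.sum_sub_distrib, ← Finset.sum_filter, ← Finset.sum_filter]
  ring

private lemma sum_E2_clique {n : ℕ} (E2 : Finset (Finset (Fin n)))
    (hE2 : ∀ e ∈ E2, e.card = 2) (T : Finset (Fin n))
    (hT2 : ∀ i ∈ T, ∀ j ∈ T, i ≠ j → ({i, j} : Finset (Fin n)) ∈ E2)
    (x : Fin n → ℝ) (hz : ∀ m, m ∉ T → x m = 0) :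
    ∑ e ∈ E2, ∏ m ∈ e, x m = ∑ e ∈ T.powersetCard 2, ∏ m ∈ e, x m := by
  have h1 : ∑ e ∈ E2.filter (· ⊆ T), ∏ m ∈ e, x m = ∑ e ∈ E2, ∏ m ∈ e, x m := by
    apply Finset.sum_filter_of_ne
    intro e _ hne m hm
    by_contra hmT
    exact hne (Finset.prod_eq_zero hm (hz m hmT))
  rw [← h1]
  congr 1
  ext e
  simp only [Finset.mem_filter, Finset.mem_powersetCard]
  constructor
  · rintro ⟨he, hsub⟩; exact ⟨hsub, hE2 e he⟩
  · rintro ⟨hsub, hcard⟩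
    obtain ⟨a, b, hab, rfl⟩ := Finset.card_eq_two.mp hcard
    refine ⟨hT2 a (hsub (mem_insert_self a {b})) b
      (hsub (mem_insert_of_mem (mem_singleton_self b))) hab, hsub⟩

private lemma ub_clique_case {t r : ℕ} (ht : 2 ≤ t) {u q : ℝ}
    (hu0 : 0 ≤ u) (hu1 : u ≤ 1) (hq : u ^ 2 ≤ r * q) (hq0 : 0 ≤ q)
    (hrt : r ≤ t) :
    u + (1 - q) ≤ 2 - 1 / t := by
  have ht0 : (0:ℝ) < t := by positivity
  have ht2 : (2:ℝ) ≤ t := by exact_mod_cast ht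
  have hinv : 1 / (t:ℝ) ≤ 1 / 2 := by
    apply one_div_le_one_div_of_le <;> linarith
  rcases lt_or_ge r 2 with hr1 | hr2
  · -- r ≤ 1 : then u² ≤ q, use u + 1 - u² ≤ 5/4
    have hr1' : (r:ℝ) ≤ 1 := by exact_mod_cast Nat.lt_succ_iff.mp hr1
    have : u ^ 2 ≤ q := le_trans hq (by nlinarith)
    nlinarith [sq_nonneg (u - 1/2)]
  · -- r ≥ 2
    have hr2' : (2:ℝ) ≤ r := by exact_mod_cast hr2
    have hr0' : (0:ℝ) < r := by linarith
    have hrt' : (r:ℝ) ≤ t := by exact_mod_cast hrt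
    have hfact : 0 ≤ (1 - u) * ((r:ℝ) - 1 - u) := mul_nonneg (by linarith) (by linarith)
    have hq' : u ^ 2 / (r:ℝ) ≤ q := (div_le_iff₀ hr0').mpr (by linarith [hq])
    have h2 : u + 1 - u ^ 2 / (r:ℝ) ≤ 2 - 1 / (r:ℝ) := by
      have h3 : 0 ≤ ((1 - u) * ((r:ℝ) - 1 - u)) / r := div_nonneg hfact hr0'.le
      have h4 : ((1 - u) * ((r:ℝ) - 1 - u)) / r = (2 - 1 / (r:ℝ)) - (u + 1 - u ^ 2 / r) := by
        field_simp
        ring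
      linarith [h4 ▸ h3]
    have h5 : 1 / (t:ℝ) ≤ 1 / (r:ℝ) := one_div_le_one_div_of_le hr0' hrt'
    linarith

private lemma ub_main {n t : ℕ} (ht : 2 ≤ t) (E1 : Finset (Fin n))
    (E2 : Finset (Finset (Fin n))) (hE2 : ∀ e ∈ E2, e.card = 2)
    (hmax : ∀ T : Finset (Fin n),
      ((∀ v ∈ T, v ∈ E1) ∧ ∀ i ∈ T, ∀ j ∈ T, i ≠ j → ({i, j} : Finset (Fin n)) ∈ E2) →
      T.card ≤ t) :
    ∀ (k : ℕ) (x : Fin n → ℝ), (∀ i, 0 ≤ x i) → (∑ i, x i) = 1 →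
      (Finset.univ.filter fun i => x i ≠ 0).card ≤ k →
      (∑ i ∈ E1, x i) + 2 * ∑ e ∈ E2, ∏ i ∈ e, x i ≤ 2 - 1 / t := by
  intro k
  induction k with
  | zero =>
    intro x hx hs hc
    exfalso
    have hz : ∀ i, x i = 0 := by
      intro i
      by_contra h
      have hi : i ∈ Finset.univ.filter (fun i => x i ≠ 0) :=
        mem_filter.mpr ⟨mem_univ i, h⟩
      have := Finset.card_pos.mpr ⟨i, hi⟩
      omega
    rw [Finset.sum_congr rfl fun i _ => hz i, Finset.sum_const, smul_zero] at hs
    norm_num at hs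
  | succ k ih =>
    intro x hx hs hc
    by_cases hcl : ∀ a b : Fin n, x a ≠ 0 → x b ≠ 0 → a ≠ b →
        ({a, b} : Finset (Fin n)) ∈ E2
    · -- clique case
      set S := Finset.univ.filter (fun i => x i ≠ 0) with hSdef
      set A := E1.filter (fun i => x i ≠ 0) with hAdef
      have hzS : ∀ m, m ∉ S → x m = 0 := by
        intro m hm
        by_contra h
        exact hm (mem_filter.mpr ⟨mem_univ m, h⟩)
      have hSsum : ∑ i ∈ S, x i = 1 := by
        rw [hSdef, Finset.sum_filter_ne_zero]; exact hs
      have hE1sum : ∑ i ∈ E1, x i = ∑ i ∈ A, x i :=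
        (Finset.sum_filter_ne_zero E1).symm
      have hSclique : ∀ a ∈ S, ∀ b ∈ S, a ≠ b → ({a, b} : Finset (Fin n)) ∈ E2 := by
        intro a ha b hb hab
        exact hcl a b (mem_filter.mp ha).2 (mem_filter.mp hb).2 hab
      rw [hE1sum, sum_E2_clique E2 hE2 S hSclique x hzS, two_mul_sum_pairs S x, hSsum]
      have hA_card : A.card ≤ t := by
        refine hmax A ⟨fun v hv => (mem_filter.mp hv).1, fun a ha b hb hab => ?_⟩
        exact hcl a b (mem_filter.mp ha).2 (mem_filter.mp hb).2 hab
      have hAS : A ⊆ S := fun i hi => mem_filter.mpr ⟨mem_univ i, (mem_filter.mp hi).2⟩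
      have hqle : ∑ i ∈ A, (x i) ^ 2 ≤ ∑ i ∈ S, (x i) ^ 2 :=
        Finset.sum_le_sum_of_subset_of_nonneg hAS fun i _ _ => sq_nonneg _
      have hcs : (∑ i ∈ A, x i) ^ 2 ≤ A.card * ∑ i ∈ A, (x i) ^ 2 :=
        sq_sum_le_card_mul_sum_sq
      have hu1 : ∑ i ∈ A, x i ≤ 1 := by
        rw [← hs]
        exact Finset.sum_le_sum_of_subset_of_nonneg (A.subset_univ) fun i _ _ => hx i
      have hu0 : 0 ≤ ∑ i ∈ A, x i := Finset.sum_nonneg fun i _ => hx i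
      have hq0 : 0 ≤ ∑ i ∈ S, (x i) ^ 2 := Finset.sum_nonneg fun i _ => sq_nonneg _
      have hq : (∑ i ∈ A, x i) ^ 2 ≤ (A.card : ℝ) * ∑ i ∈ S, (x i) ^ 2 := by
        refine le_trans hcs (mul_le_mul_of_nonneg_left hqle (by positivity))
      have := ub_clique_case ht hu0 hu1 hq hq0 hA_card
      nlinarith [this]
    · -- non-clique case
      push_neg at hcl
      obtain ⟨a, b, hxa, hxb, hab, hnot⟩ := hcl
      have key : ∀ i j : Fin n, x i ≠ 0 → x j ≠ 0 → i ≠ j →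
          ({i, j} : Finset (Fin n)) ∉ E2 →
          ((if j ∈ E1 then (1:ℝ) else 0)
              + 2 * ∑ e ∈ E2.filter (j ∈ ·), ∏ m ∈ e.erase j, x m)
            ≤ ((if i ∈ E1 then (1:ℝ) else 0)
              + 2 * ∑ e ∈ E2.filter (i ∈ ·), ∏ m ∈ e.erase i, x m) →
          (∑ i ∈ E1, x i) + 2 * ∑ e ∈ E2, ∏ m ∈ e, x m ≤ 2 - 1 / t := by
        intro i j hxi hxj hij hnotij hcc
        set y := shf x i j with hy
        have hy0 : ∀ m, 0 ≤ y m := by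
          intro m
          simp only [hy, shf]
          split_ifs
          · exact le_refl 0
          · exact add_nonneg (hx i) (hx j)
          · exact hx m
        have hysum : (∑ m, y m) = 1 := by
          rw [hy, shf_sum x hij]
          simp [hs]
        have hsupp : (Finset.univ.filter fun m => y m ≠ 0)
            ⊆ (Finset.univ.filter fun m => x m ≠ 0).erase j := by
          intro m hm
          rw [mem_filter] at hm
          have hmj : m ≠ j := by
            rintro rfl
            exact hm.2 (by simp [hy, shf])
          refine Finset.mem_erase.mpr ⟨hmj, mem_filter.mpr ⟨mem_univ m, ?_⟩⟩
          rcases eq_or_ne m i with rfl | hmi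
          · exact hxi
          · intro h
            exact hm.2 (by simpa [hy, shf, hmj, hmi] using h)
        have hjS : j ∈ Finset.univ.filter fun m => x m ≠ 0 :=
          mem_filter.mpr ⟨mem_univ j, hxj⟩
        have hcard : (Finset.univ.filter fun m => y m ≠ 0).card ≤ k := by
          have h1 := Finset.card_le_card hsupp
          rw [Finset.card_erase_of_mem hjS] at h1
          omega
        have hval := shift_val E1 E2 hE2 x hij hnotij
        have hih := ih y hy0 hysum hcard
        have hmul : 0 ≤ x j * (((if i ∈ E1 then (1:ℝ) else 0)
              + 2 * ∑ e ∈ E2.filter (i ∈ ·), ∏ m ∈ e.erase i, x m)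
            - ((if j ∈ E1 then (1:ℝ) else 0)
              + 2 * ∑ e ∈ E2.filter (j ∈ ·), ∏ m ∈ e.erase j, x m)) :=
          mul_nonneg (hx j) (sub_nonneg.mpr hcc)
        rw [hy] at hih
        linarith [hval, hih, hmul]
      rcases le_total
          ((if b ∈ E1 then (1:ℝ) else 0)
            + 2 * ∑ e ∈ E2.filter (b ∈ ·), ∏ m ∈ e.erase b, x m)
          ((if a ∈ E1 then (1:ℝ) else 0)
            + 2 * ∑ e ∈ E2.filter (a ∈ ·), ∏ m ∈ e.erase a, x m) with h | h
      · exact key a b hxa hxb hab hnot h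
      · exact key b a hxb hxa hab.symm (by rwa [Finset.pair_comm]) h

/-- Extension of Motzkin–Straus to `{1,2}`-graphs: if the order of a maximum complete
`{1,2}`-subgraph of `H` is `t ≥ 2`, then `λ'(H) = 2 - 1/t`. -/
theorem lagrangian_one_two_graph (n t : ℕ) (ht : 2 ≤ t)
    (E1 : Finset (Fin n)) (E2 : Finset (Finset (Fin n))) (hE2 : ∀ e ∈ E2, e.card = 2)
    (hclique : ∃ T : Finset (Fin n), T.card = t ∧ (∀ v ∈ T, v ∈ E1) ∧
      ∀ i ∈ T, ∀ j ∈ T, i ≠ j → ({i, j} : Finset (Fin n)) ∈ E2)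
    (hmax : ∀ T : Finset (Fin n),
      ((∀ v ∈ T, v ∈ E1) ∧ ∀ i ∈ T, ∀ j ∈ T, i ≠ j → ({i, j} : Finset (Fin n)) ∈ E2) →
      T.card ≤ t) :
    IsGreatest {v : ℝ | ∃ x : Fin n → ℝ, (∀ i, 0 ≤ x i) ∧ (∑ i, x i) = 1 ∧
      v = (∑ i ∈ E1, x i) + 2 * ∑ e ∈ E2, ∏ i ∈ e, x i} (2 - 1 / t) := by
  obtain ⟨T, hTcard, hT1, hT2⟩ := hclique
  have ht0 : (0:ℝ) < t := by
    have : (2:ℝ) ≤ t := by exact_mod_cast ht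
    linarith
  constructor
  · refine ⟨fun i => if i ∈ T then 1 / (t : ℝ) else 0, fun i => ?_, ?_, ?_⟩
    · dsimp only
      split_ifs
      · positivity
      · exact le_rfl
    · rw [Finset.sum_ite_mem, Finset.univ_inter, Finset.sum_const, hTcard,
        nsmul_eq_mul]
      field_simp
    · have hE1 : ∑ i ∈ E1, (if i ∈ T then 1 / (t:ℝ) else 0) = 1 := by
        rw [Finset.sum_ite_mem, Finset.inter_eq_right.mpr hT1, Finset.sum_const,
          hTcard, nsmul_eq_mul]
        field_simp
      have hz : ∀ m, m ∉ T → (if m ∈ T then 1 / (t:ℝ) else 0) = 0 := fun m hm => if_neg hm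
      rw [hE1, sum_E2_clique E2 hE2 T hT2 _ hz, two_mul_sum_pairs T _]
      have h1 : ∑ i ∈ T, (if i ∈ T then 1 / (t:ℝ) else 0) = 1 := by
        rw [Finset.sum_ite_mem, Finset.inter_self, Finset.sum_const, hTcard, nsmul_eq_mul]
        field_simp
      have h2 : ∑ i ∈ T, (if i ∈ T then 1 / (t:ℝ) else 0) ^ 2 = 1 / t := by
        rw [Finset.sum_congr rfl fun i hi => by rw [if_pos hi], Finset.sum_const,
          hTcard, nsmul_eq_mul]
        field_simp
      rw [h1, h2]
      ring
  · rintro v ⟨x, hx, hs, rfl⟩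
    exact ub_main ht E1 E2 hE2 hmax _ x hx hs le_rfl
end

section
/- Let H be a hypergraph on [n] and x an optimal weighting for λ'(H) with positive coordinates exactly x_1,...,x_k, where additionally the number of positive coordinates k is minimal among all optimal weightings. Then for every pair 1 ≤ i < j ≤ k, there exists an edge e of H with {i,j} ⊆ e. -/
open Finset

lemma shift_value {n : ℕ} (E : Finset (Finset (Fin n))) (x : Fin n → ℝ)
    (a b : Fin n) (hab : a ≠ b) (hEab : ∀ e ∈ E, ¬(a ∈ e ∧ b ∈ e)) :
    (∑ e ∈ E, (Nat.factorial e.card : ℝ) *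
        ∏ m ∈ e, (if m = a then 0 else if m = b then x b + x a else x m)) =
      (∑ e ∈ E, (Nat.factorial e.card : ℝ) * ∏ m ∈ e, x m)
      + x a * ((∑ e ∈ E, if b ∈ e then (Nat.factorial e.card : ℝ) * ∏ m ∈ e.erase b, x m else 0)
             - (∑ e ∈ E, if a ∈ e then (Nat.factorial e.card : ℝ) * ∏ m ∈ e.erase a, x m else 0)) := by
  have key : ∀ e ∈ E, (Nat.factorial e.card : ℝ) *
      ∏ m ∈ e, (if m = a then 0 else if m = b then x b + x a else x m) =
      (Nat.factorial e.card : ℝ) * ∏ m ∈ e, x m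
      + x a * ((if b ∈ e then (Nat.factorial e.card : ℝ) * ∏ m ∈ e.erase b, x m else 0)
             - (if a ∈ e then (Nat.factorial e.card : ℝ) * ∏ m ∈ e.erase a, x m else 0)) := by
    intro e he
    have hnot := hEab e he
    by_cases hb : b ∈ e
    · have ha : a ∉ e := fun h => hnot ⟨h, hb⟩
      have hcongr : ∀ m ∈ e.erase b,
          (if m = a then 0 else if m = b then x b + x a else x m) = x m := by
        intro m hm
        have hm' := Finset.mem_erase.1 hm
        rw [if_neg (by rintro rfl; exact ha (Finset.mem_of_mem_erase hm)), if_neg hm'.1]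
      rw [← Finset.mul_prod_erase e _ hb, Finset.prod_congr rfl hcongr,
        if_neg (show ¬ b = a from fun h => hab h.symm), if_pos rfl,
        if_pos hb, if_neg ha, ← Finset.mul_prod_erase e x hb]
      ring
    · by_cases ha : a ∈ e
      · have hzero : ∏ m ∈ e, (if m = a then 0 else if m = b then x b + x a else x m) = 0 :=
          Finset.prod_eq_zero ha (by simp)
        rw [hzero, if_neg hb, if_pos ha, ← Finset.mul_prod_erase e x ha]
        ring
      · have hcongr : ∀ m ∈ e,
            (if m = a then 0 else if m = b then x b + x a else x m) = x m := by
          intro m hm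
          rw [if_neg (by rintro rfl; exact ha hm), if_neg (by rintro rfl; exact hb hm)]
        rw [Finset.prod_congr rfl hcongr, if_neg hb, if_neg ha]
        ring
  rw [Finset.sum_congr rfl key, Finset.sum_add_distrib, ← Finset.mul_sum,
    Finset.sum_sub_distrib]

lemma shift_sum {n : ℕ} (x : Fin n → ℝ) (a b : Fin n) (hab : a ≠ b) :
    (∑ m, (if m = a then 0 else if m = b then x b + x a else x m)) = ∑ m, x m := by
  have : ∀ m : Fin n, (if m = a then 0 else if m = b then x b + x a else x m)
      = x m + (if m = b then x a else 0) - (if m = a then x m else 0) := by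
    intro m
    by_cases ha : m = a
    · subst ha; rw [if_pos rfl, if_pos rfl, if_neg hab]; ring
    · by_cases hb : m = b
      · subst hb; rw [if_neg ha, if_pos rfl, if_pos rfl, if_neg ha]; ring
      · rw [if_neg ha, if_neg hb, if_neg hb, if_neg ha]; ring
  rw [Finset.sum_congr rfl (fun m _ => this m), Finset.sum_sub_distrib,
    Finset.sum_add_distrib, Finset.sum_ite_eq' univ b (fun _ => x a),
    Finset.sum_ite_eq' univ a x]
  simp [hab]

/-- Lemma 2: if `x` is an optimal weighting for `λ'(H)` with positive coordinates exactly
`x_1, …, x_k`, and the number of positive coordinates is minimal among all optimal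
weightings, then every pair of support vertices is covered by some edge of `H`. -/
theorem optimal_weighting_pairs_covered (n k : ℕ)
    (E : Finset (Finset (Fin n))) (hE : ∀ e ∈ E, e.Nonempty)
    (x : Fin n → ℝ) (hx0 : ∀ i, 0 ≤ x i) (hx1 : (∑ i, x i) = 1)
    (hopt : ∀ y : Fin n → ℝ, (∀ i, 0 ≤ y i) → (∑ i, y i) = 1 →
      (∑ e ∈ E, (Nat.factorial e.card) * ∏ m ∈ e, y m) ≤
        ∑ e ∈ E, (Nat.factorial e.card) * ∏ m ∈ e, x m)
    (hsupp : ∀ i : Fin n, 0 < x i ↔ (i : ℕ) < k)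
    (hmin : ∀ y : Fin n → ℝ, (∀ i, 0 ≤ y i) → (∑ i, y i) = 1 →
      (∑ e ∈ E, (Nat.factorial e.card) * ∏ m ∈ e, y m) =
        (∑ e ∈ E, (Nat.factorial e.card) * ∏ m ∈ e, x m) →
      (univ.filter (fun i => 0 < x i)).card ≤ (univ.filter (fun i => 0 < y i)).card) :
    ∀ i j : Fin n, (i : ℕ) < k → (j : ℕ) < k → i ≠ j → ∃ e ∈ E, i ∈ e ∧ j ∈ e := by
  intro i j hi hj hij
  by_contra hne
  push_neg at hne
  have hEij : ∀ e ∈ E, ¬(i ∈ e ∧ j ∈ e) := fun e he h => hne e he h.1 h.2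
  have hEji : ∀ e ∈ E, ¬(j ∈ e ∧ i ∈ e) := fun e he h => hne e he h.2 h.1
  have hxi : 0 < x i := (hsupp i).2 hi
  have hxj : 0 < x j := (hsupp j).2 hj
  set A := ∑ e ∈ E, if i ∈ e then (Nat.factorial e.card : ℝ) * ∏ m ∈ e.erase i, x m else 0
    with hA
  set B := ∑ e ∈ E, if j ∈ e then (Nat.factorial e.card : ℝ) * ∏ m ∈ e.erase j, x m else 0
    with hB
  set V := ∑ e ∈ E, (Nat.factorial e.card : ℝ) * ∏ m ∈ e, x m with hV
  -- y : move mass from j to i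
  set y : Fin n → ℝ := fun m => if m = j then 0 else if m = i then x i + x j else x m with hy
  set z : Fin n → ℝ := fun m => if m = i then 0 else if m = j then x j + x i else x m with hz
  have hy0 : ∀ m, 0 ≤ y m := by
    intro m; simp only [hy]
    split_ifs with h1 h2
    · exact le_refl 0
    · positivity
    · exact hx0 m
  have hz0 : ∀ m, 0 ≤ z m := by
    intro m; simp only [hz]
    split_ifs with h1 h2
    · exact le_refl 0
    · positivity
    · exact hx0 m
  have hy1 : (∑ m, y m) = 1 := by rw [hy, shift_sum x j i (Ne.symm hij), hx1]
  have hz1 : (∑ m, z m) = 1 := by rw [hz, shift_sum x i j hij, hx1]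
  have hyval : (∑ e ∈ E, (Nat.factorial e.card : ℝ) * ∏ m ∈ e, y m) = V + x j * (A - B) := by
    rw [hy]; exact shift_value E x j i (Ne.symm hij) hEji
  have hzval : (∑ e ∈ E, (Nat.factorial e.card : ℝ) * ∏ m ∈ e, z m) = V + x i * (B - A) := by
    rw [hz]; exact shift_value E x i j hij hEij
  have h1 : V + x j * (A - B) ≤ V := by rw [← hyval]; exact hopt y hy0 hy1
  have h2 : V + x i * (B - A) ≤ V := by rw [← hzval]; exact hopt z hz0 hz1
  have hAB : A = B := by nlinarith
  have hyeq : (∑ e ∈ E, (Nat.factorial e.card : ℝ) * ∏ m ∈ e, y m) = V := by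
    rw [hyval, hAB]; ring
  have hcard := hmin y hy0 hy1 hyeq
  have hsub : univ.filter (fun m => 0 < y m) ⊂ univ.filter (fun m => 0 < x m) := by
    constructor
    · intro m hm
      simp only [Finset.mem_filter, Finset.mem_univ, true_and] at hm ⊢
      simp only [hy] at hm
      split_ifs at hm with h1 h2
      · exact absurd hm (lt_irrefl 0)
      · subst h2; exact hxi
      · exact hm
    · intro hcon
      have hjm : j ∈ univ.filter (fun m => 0 < x m) := by
        simp [hxj]
      have := hcon hjm
      simp [hy] at this
  have hlt := Finset.card_lt_card hsub
  omega
end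

section
/- Let H be a {1,2}-graph on [n] and x an optimal weighting with positive coordinates x_1,...,x_k such that every pair 1 ≤ i < j ≤ k is an edge of H^2. If {i} ∈ H^1 but {j} ∉ H^1 for some 1 ≤ i, j ≤ k, then x_i - x_j = 1/2. -/
open Finset


lemma erase_pair_sum {n k : ℕ} (E2 : Finset (Finset (Fin n)))
    (hE2 : ∀ e ∈ E2, e.card = 2) (x : Fin n → ℝ)
    (hx0 : ∀ m, 0 ≤ x m) (hsupp : ∀ m : Fin n, 0 < x m ↔ (m : ℕ) < k)
    (hpairs : ∀ a b : Fin n, (a : ℕ) < k → (b : ℕ) < k → a ≠ b →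
      ({a, b} : Finset (Fin n)) ∈ E2)
    (i j : Fin n) (hik : (i : ℕ) < k) (hij : i ≠ j) :
    ∑ e ∈ E2.filter (fun e => i ∈ e ∧ j ∉ e), ∏ m ∈ e.erase i, x m
      = ∑ m ∈ (univ.erase i).erase j, x m := by
  refine (Finset.sum_bij_ne_zero (fun m _ _ => ({i, m} : Finset (Fin n))) ?_ ?_ ?_ ?_).symm
  · intro m hm hx
    have hmj : m ≠ j := (mem_erase.1 hm).1
    have hmi : m ≠ i := (mem_erase.1 (mem_erase.1 hm).2).1
    have hmk : (m : ℕ) < k := (hsupp m).1 (lt_of_le_of_ne (hx0 m) (Ne.symm hx))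
    simp only [mem_filter]
    refine ⟨hpairs i m hik hmk (Ne.symm hmi), by simp, ?_⟩
    simp only [mem_insert, mem_singleton]
    push_neg
    exact ⟨fun h => hij h.symm, fun h => hmj h.symm⟩
  · intro a h1 h2 b h3 h4 hab
    have hab' : ({i, a} : Finset (Fin n)) = {i, b} := hab
    have ha : a ∈ ({i, b} : Finset (Fin n)) := hab' ▸ (by simp)
    have hai : a ≠ i := (mem_erase.1 (mem_erase.1 h1).2).1
    rcases mem_insert.1 ha with h | h
    · exact absurd h hai
    · exact mem_singleton.1 h
  · intro e he hge
    simp only [mem_filter] at he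
    obtain ⟨heE, hie, hje⟩ := he
    have hcard : (e.erase i).card = 1 := by
      rw [card_erase_of_mem hie, hE2 e heE]
    obtain ⟨m, hm⟩ := card_eq_one.1 hcard
    have hmi : m ≠ i := by
      have : m ∈ e.erase i := hm ▸ mem_singleton_self m
      exact (mem_erase.1 this).1
    have hme : m ∈ e := by
      have : m ∈ e.erase i := hm ▸ mem_singleton_self m
      exact mem_of_mem_erase this
    have hmj : m ≠ j := fun h => hje (h ▸ hme)
    have hxm : x m ≠ 0 := by
      rw [hm, prod_singleton] at hge; exact hge
    refine ⟨m, ?_, hxm, ?_⟩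
    · exact mem_erase.2 ⟨hmj, mem_erase.2 ⟨hmi, mem_univ m⟩⟩
    · have : e = insert i (e.erase i) := (insert_erase hie).symm
      rw [hm] at this
      rw [this]
  · intro m hm hx
    have hmi : m ≠ i := (mem_erase.1 (mem_erase.1 hm).2).1
    have : ({i, m} : Finset (Fin n)).erase i = {m} := by
      rw [show ({i, m} : Finset (Fin n)) = insert i {m} from rfl,
        erase_insert (by simp [Ne.symm hmi])]
    rw [this, prod_singleton]


lemma pair_decomp {n : ℕ} (E2 : Finset (Finset (Fin n)))
    (hE2 : ∀ e ∈ E2, e.card = 2) (i j : Fin n) (hij : i ≠ j)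
    (hmem : ({i, j} : Finset (Fin n)) ∈ E2) (f : Fin n → ℝ) :
    ∑ e ∈ E2, ∏ m ∈ e, f m =
      f i * f j
      + f i * ∑ e ∈ E2.filter (fun e => i ∈ e ∧ j ∉ e), ∏ m ∈ e.erase i, f m
      + f j * ∑ e ∈ E2.filter (fun e => j ∈ e ∧ i ∉ e), ∏ m ∈ e.erase j, f m
      + ∑ e ∈ E2.filter (fun e => i ∉ e ∧ j ∉ e), ∏ m ∈ e, f m := by
  have hpairfil : E2.filter (fun e => i ∈ e ∧ j ∈ e) = {({i, j} : Finset (Fin n))} := by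
    ext e
    simp only [mem_filter, mem_singleton]
    constructor
    · rintro ⟨heE, hie, hje⟩
      refine (eq_of_subset_of_card_le ?_ ?_).symm
      · rw [insert_subset_iff, singleton_subset_iff]; exact ⟨hie, hje⟩
      · rw [hE2 e heE, card_insert_of_notMem (by simp [hij]), card_singleton]
    · rintro rfl
      exact ⟨hmem, by simp, by simp⟩
  have split1 := sum_filter_add_sum_filter_not E2 (fun e => i ∈ e) (fun e => ∏ m ∈ e, f m)
  have split2 := sum_filter_add_sum_filter_not (E2.filter (fun e => i ∈ e))
    (fun e => j ∈ e) (fun e => ∏ m ∈ e, f m)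
  have split3 := sum_filter_add_sum_filter_not (E2.filter (fun e => ¬ i ∈ e))
    (fun e => j ∈ e) (fun e => ∏ m ∈ e, f m)
  rw [filter_filter, filter_filter] at split2
  rw [filter_filter, filter_filter] at split3
  have e1 : ∑ e ∈ E2.filter (fun e => i ∈ e ∧ j ∈ e), ∏ m ∈ e, f m = f i * f j := by
    rw [hpairfil, sum_singleton, prod_pair hij]
  have e2 : ∑ e ∈ E2.filter (fun e => i ∈ e ∧ ¬ j ∈ e), ∏ m ∈ e, f m
      = f i * ∑ e ∈ E2.filter (fun e => i ∈ e ∧ j ∉ e), ∏ m ∈ e.erase i, f m := by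
    rw [mul_sum]
    refine sum_congr rfl ?_
    intro e he
    simp only [mem_filter] at he
    exact (mul_prod_erase e f he.2.1).symm
  have e3 : ∑ e ∈ E2.filter (fun e => ¬ i ∈ e ∧ j ∈ e), ∏ m ∈ e, f m
      = f j * ∑ e ∈ E2.filter (fun e => j ∈ e ∧ i ∉ e), ∏ m ∈ e.erase j, f m := by
    rw [mul_sum, show E2.filter (fun e => ¬ i ∈ e ∧ j ∈ e)
        = E2.filter (fun e => j ∈ e ∧ i ∉ e) from filter_congr (by tauto)]
    refine sum_congr rfl ?_
    intro e he
    simp only [mem_filter] at he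
    exact (mul_prod_erase e f he.2.1).symm
  have e4 : E2.filter (fun e => ¬ i ∈ e ∧ ¬ j ∈ e) = E2.filter (fun e => i ∉ e ∧ j ∉ e) :=
    filter_congr (by tauto)
  rw [e1, e2] at split2
  rw [e3, e4] at split3
  linarith [split1, split2, split3]

/-- Claim 1: for a `{1,2}`-graph `H` with optimal weighting `x` supported on `{1,…,k}`
such that every pair of support vertices is an edge of `H²`, if `{i} ∈ H¹` and
`{j} ∉ H¹` for support vertices `i, j`, then `x_i - x_j = 1/2`. -/
theorem singleton_weight_gap (n k : ℕ)
    (E1 : Finset (Fin n)) (E2 : Finset (Finset (Fin n))) (hE2 : ∀ e ∈ E2, e.card = 2)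
    (x : Fin n → ℝ) (hx0 : ∀ i, 0 ≤ x i) (hx1 : (∑ i, x i) = 1)
    (hopt : ∀ y : Fin n → ℝ, (∀ i, 0 ≤ y i) → (∑ i, y i) = 1 →
      ((∑ i ∈ E1, y i) + 2 * ∑ e ∈ E2, ∏ m ∈ e, y m) ≤
        (∑ i ∈ E1, x i) + 2 * ∑ e ∈ E2, ∏ m ∈ e, x m)
    (hsupp : ∀ i : Fin n, 0 < x i ↔ (i : ℕ) < k)
    (hpairs : ∀ i j : Fin n, (i : ℕ) < k → (j : ℕ) < k → i ≠ j →
      ({i, j} : Finset (Fin n)) ∈ E2) :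
    ∀ i j : Fin n, (i : ℕ) < k → (j : ℕ) < k → i ∈ E1 → j ∉ E1 →
      x i - x j = 1 / 2 := by
  intro i j hik hjk hiE1 hjE1
  have hij : i ≠ j := by rintro rfl; exact hjE1 hiE1
  have hxi : 0 < x i := (hsupp i).2 hik
  have hxj : 0 < x j := (hsupp j).2 hjk
  have hmem : ({i, j} : Finset (Fin n)) ∈ E2 := hpairs i j hik hjk hij
  set c : ℝ := 2 * (x i - x j) - 1 with hc
  -- the perturbed weighting
  set y : ℝ → Fin n → ℝ :=
    fun t m => if m = i then x i - t else if m = j then x j + t else x m with hy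
  have hyi : ∀ t, y t i = x i - t := by intro t; simp [hy]
  have hyj : ∀ t, y t j = x j + t := by
    intro t; simp only [hy]; rw [if_neg (Ne.symm hij)]; simp
  have hyo : ∀ t m, m ≠ i → m ≠ j → y t m = x m := by
    intro t m h1 h2; simp [hy, h1, h2]
  -- pointwise description for sums
  have hptw : ∀ t m, y t m = x m + (if m = i then -t else 0) + (if m = j then t else 0) := by
    intro t m
    by_cases h1 : m = i
    · subst h1; simp [hyi, if_neg hij]; ring
    · by_cases h2 : m = j
      · subst h2; simp [hyj, if_neg h1]
      · simp [hyo t m h1 h2, h1, h2]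
  have hysum : ∀ t, (∑ m, y t m) = 1 := by
    intro t
    simp only [hptw t]
    rw [sum_add_distrib, sum_add_distrib, hx1,
      sum_ite_eq' univ i (fun _ => -t), sum_ite_eq' univ j (fun _ => t)]
    simp
  have hE1sum : ∀ t, (∑ m ∈ E1, y t m) = (∑ m ∈ E1, x m) - t := by
    intro t
    simp only [hptw t]
    rw [sum_add_distrib, sum_add_distrib,
      sum_ite_eq' E1 i (fun _ => -t), sum_ite_eq' E1 j (fun _ => t)]
    simp [hiE1, hjE1]
    ring
  -- the erase sums are the same for x and y t
  set S : ℝ := ∑ m ∈ (univ.erase i).erase j, x m with hS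
  have hSi : ∑ e ∈ E2.filter (fun e => i ∈ e ∧ j ∉ e), ∏ m ∈ e.erase i, x m = S :=
    erase_pair_sum E2 hE2 x hx0 hsupp hpairs i j hik hij
  have hSj : ∑ e ∈ E2.filter (fun e => j ∈ e ∧ i ∉ e), ∏ m ∈ e.erase j, x m = S := by
    rw [erase_pair_sum E2 hE2 x hx0 hsupp hpairs j i hjk (Ne.symm hij)]
    rw [hS, erase_right_comm]
  have hSiy : ∀ t, ∑ e ∈ E2.filter (fun e => i ∈ e ∧ j ∉ e), ∏ m ∈ e.erase i, y t m = S := by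
    intro t
    rw [← hSi]
    refine sum_congr rfl fun e he => prod_congr rfl fun m hm => ?_
    simp only [mem_filter] at he
    exact hyo t m (mem_erase.1 hm).1 (fun h => he.2.2 (h ▸ mem_of_mem_erase hm))
  have hSjy : ∀ t, ∑ e ∈ E2.filter (fun e => j ∈ e ∧ i ∉ e), ∏ m ∈ e.erase j, y t m = S := by
    intro t
    rw [← hSj]
    refine sum_congr rfl fun e he => prod_congr rfl fun m hm => ?_
    simp only [mem_filter] at he
    exact hyo t m (fun h => he.2.2 (h ▸ mem_of_mem_erase hm)) (mem_erase.1 hm).1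
  have hDy : ∀ t, ∑ e ∈ E2.filter (fun e => i ∉ e ∧ j ∉ e), ∏ m ∈ e, y t m
      = ∑ e ∈ E2.filter (fun e => i ∉ e ∧ j ∉ e), ∏ m ∈ e, x m := by
    intro t
    refine sum_congr rfl fun e he => prod_congr rfl fun m hm => ?_
    simp only [mem_filter] at he
    exact hyo t m (fun h => he.2.1 (h ▸ hm)) (fun h => he.2.2 (h ▸ hm))
  -- the key inequality
  have hkey : ∀ t : ℝ, -x j ≤ t → t ≤ x i → t * c - 2 * t ^ 2 ≤ 0 := by
    intro t ht1 ht2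
    have hpos : ∀ m, 0 ≤ y t m := by
      intro m
      by_cases h1 : m = i
      · subst h1; rw [hyi]; linarith
      · by_cases h2 : m = j
        · subst h2; rw [hyj]; linarith
        · rw [hyo t m h1 h2]; exact hx0 m
    have hle := hopt (y t) hpos (hysum t)
    have hdx := pair_decomp E2 hE2 i j hij hmem x
    have hdy := pair_decomp E2 hE2 i j hij hmem (y t)
    rw [hyi, hyj, hSiy, hSjy, hDy] at hdy
    rw [hSi, hSj] at hdx
    rw [hE1sum, hdy, hdx] at hle
    nlinarith [hle]
  -- conclude c = 0
  have hc0 : c = 0 := by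
    rcases lt_trichotomy c 0 with h | h | h
    · exfalso
      set u : ℝ := min (-c/4) (x j) with hu
      have hu1 : 0 < u := lt_min (by linarith) hxj
      have hu2 : u ≤ -c/4 := min_le_left _ _
      have hu3 : u ≤ x j := min_le_right _ _
      have h1 := hkey (-u) (by linarith) (by linarith)
      nlinarith [h1, hu1, hu2]
    · exact h
    · exfalso
      set u : ℝ := min (c/4) (x i) with hu
      have hu1 : 0 < u := lt_min (by linarith) hxi
      have hu2 : u ≤ c/4 := min_le_left _ _
      have hu3 : u ≤ x i := min_le_right _ _
      have h1 := hkey u (by linarith) hu3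
      nlinarith [h1, hu1, hu2]
  rw [hc] at hc0
  linarith
end

section
/- If H is a {1,2}-graph whose 2-level graph H^2 is not bipartite and has chromatic number t = χ(H^2) ≥ 3, then the Turán density of H is π(H) = 2 - 1/(t-1). -/
open Finset Filter



section Graphs
variable {V : Type} [Fintype V] [DecidableEq V] (G : SimpleGraph V) [DecidableRel G.Adj]

lemma inter_eq_filter (W : Finset V) (v : V) :
    G.neighborFinset v ∩ W = W.filter (fun u => G.Adj v u) := by
  ext u; simp [SimpleGraph.mem_neighborFinset, and_comm]

lemma sum_swap_deg (W K : Finset V) :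
    ∑ v ∈ W, (G.neighborFinset v ∩ K).card = ∑ u ∈ K, (G.neighborFinset u ∩ W).card := by
  simp only [inter_eq_filter, card_filter]
  rw [Finset.sum_comm]
  refine Finset.sum_congr rfl fun u _ => Finset.sum_congr rfl fun v _ => ?_
  exact if_congr (G.adj_comm v u) rfl rfl

lemma deg_le_real (W : Finset V) (v : V) (hv : v ∈ W) :
    ((G.neighborFinset v ∩ W).card : ℝ) ≤ (W.card : ℝ) - 1 := by
  have hsub : G.neighborFinset v ∩ W ⊆ W.erase v := by
    intro u hu
    simp only [mem_inter, SimpleGraph.mem_neighborFinset] at hu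
    exact mem_erase.2 ⟨(G.ne_of_adj hu.1).symm, hu.2⟩
  have h1 : (G.neighborFinset v ∩ W).card ≤ W.card - 1 := by
    simpa [card_erase_of_mem hv] using card_le_card hsub
  have h2 : 1 ≤ W.card := card_pos.2 ⟨v, hv⟩
  have := (Nat.cast_le (α := ℝ)).2 h1
  rw [Nat.cast_sub h2] at this; exact_mod_cast this

lemma card_mul_pred_nonneg (k : ℕ) : (0:ℝ) ≤ (k:ℝ) * ((k:ℝ) - 1) := by
  rcases Nat.eq_zero_or_pos k with h | h
  · simp [h]
  · have : (1:ℝ) ≤ k := by exact_mod_cast h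
    nlinarith

lemma erase_deg_sum (W : Finset V) (v₀ : V) (hv₀ : v₀ ∈ W) :
    (∑ u ∈ W.erase v₀, ((G.neighborFinset u ∩ W.erase v₀).card:ℝ))
      = ∑ v ∈ W, ((G.neighborFinset v ∩ W).card:ℝ)
          - 2 * ((G.neighborFinset v₀ ∩ W).card:ℝ) := by
  have key : ∀ u ∈ W.erase v₀,
      ((G.neighborFinset u ∩ W).card:ℝ)
        = ((G.neighborFinset u ∩ W.erase v₀).card:ℝ) + (if G.Adj u v₀ then 1 else 0) := by
    intro u hu
    have heq : G.neighborFinset u ∩ W.erase v₀ = (G.neighborFinset u ∩ W).erase v₀ := by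
      ext x
      simp only [mem_inter, mem_erase, SimpleGraph.mem_neighborFinset]
      tauto
    rw [heq]
    by_cases hadj : G.Adj u v₀
    · have hv0mem : v₀ ∈ G.neighborFinset u ∩ W := by
        simp [SimpleGraph.mem_neighborFinset, hadj, hv₀]
      rw [card_erase_of_mem hv0mem, if_pos hadj]
      have : 1 ≤ (G.neighborFinset u ∩ W).card := card_pos.2 ⟨v₀, hv0mem⟩
      rw [Nat.cast_sub this]; ring
    · have : v₀ ∉ G.neighborFinset u ∩ W := by
        simp [SimpleGraph.mem_neighborFinset, hadj]
      rw [erase_eq_of_notMem this, if_neg hadj]; ring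
  have hNv₀ : G.neighborFinset v₀ ∩ W.erase v₀ = G.neighborFinset v₀ ∩ W := by
    ext x
    simp only [mem_inter, mem_erase, SimpleGraph.mem_neighborFinset]
    constructor
    · rintro ⟨h1, _, h3⟩; exact ⟨h1, h3⟩
    · rintro ⟨h1, h3⟩; exact ⟨h1, (G.ne_of_adj h1).symm, h3⟩
  have hsum : ∑ u ∈ W.erase v₀, ((G.neighborFinset u ∩ W).card:ℝ)
      = ∑ u ∈ W.erase v₀, ((G.neighborFinset u ∩ W.erase v₀).card:ℝ)
        + ∑ u ∈ W.erase v₀, (if G.Adj u v₀ then (1:ℝ) else 0) := by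
    rw [← Finset.sum_add_distrib]
    exact Finset.sum_congr rfl key
  have hcnt : ∑ u ∈ W.erase v₀, (if G.Adj u v₀ then (1:ℝ) else 0)
      = ((G.neighborFinset v₀ ∩ W).card:ℝ) := by
    rw [← hNv₀, inter_eq_filter]
    rw [Finset.card_filter]
    push_cast
    refine Finset.sum_congr rfl fun u _ => ?_
    exact if_congr (G.adj_comm u v₀) rfl rfl
  have htot : ∑ v ∈ W, ((G.neighborFinset v ∩ W).card:ℝ)
      = ∑ u ∈ W.erase v₀, ((G.neighborFinset u ∩ W).card:ℝ)
        + ((G.neighborFinset v₀ ∩ W).card:ℝ) :=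
    (Finset.sum_erase_add W _ hv₀).symm
  rw [htot, hsum, hcnt]; ring

lemma clean (γ : ℝ) (hγ : 0 ≤ γ) (c' : ℝ) (W : Finset V)
    (h : γ * (W.card:ℝ) * ((W.card:ℝ) - 1) + c'
        ≤ ∑ v ∈ W, ((G.neighborFinset v ∩ W).card : ℝ)) :
    ∃ W', W' ⊆ W ∧ (∀ v ∈ W', γ * ((W'.card:ℝ) - 1) ≤ ((G.neighborFinset v ∩ W').card : ℝ)) ∧
      c' ≤ (W'.card : ℝ) * ((W'.card:ℝ) - 1) := by
  induction W using Finset.strongInduction with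
  | _ W ih =>
    by_cases hall : ∀ v ∈ W, γ * ((W.card:ℝ) - 1) ≤ ((G.neighborFinset v ∩ W).card : ℝ)
    · refine ⟨W, Finset.Subset.refl _, hall, ?_⟩
      have hb : ∑ v ∈ W, ((G.neighborFinset v ∩ W).card : ℝ)
          ≤ (W.card:ℝ) * ((W.card:ℝ) - 1) := by
        calc ∑ v ∈ W, ((G.neighborFinset v ∩ W).card : ℝ)
            ≤ ∑ _v ∈ W, ((W.card:ℝ) - 1) :=
              Finset.sum_le_sum (fun v hv => deg_le_real G W v hv)
          _ = (W.card:ℝ) * ((W.card:ℝ) - 1) := by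
              rw [Finset.sum_const, nsmul_eq_mul]
      have hpos : (0:ℝ) ≤ (W.card:ℝ) * ((W.card:ℝ) - 1) := card_mul_pred_nonneg _
      nlinarith
    · push_neg at hall
      obtain ⟨v₀, hv₀W, hv₀⟩ := hall
      have hcard1 : 1 ≤ W.card := card_pos.2 ⟨v₀, hv₀W⟩
      have hUcard : ((W.erase v₀).card : ℝ) = (W.card:ℝ) - 1 := by
        rw [card_erase_of_mem hv₀W, Nat.cast_sub hcard1]; norm_num
      have hsum := erase_deg_sum G W v₀ hv₀W
      have hhyp : γ * ((W.erase v₀).card:ℝ) * (((W.erase v₀).card:ℝ) - 1) + c'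
          ≤ ∑ u ∈ W.erase v₀, ((G.neighborFinset u ∩ W.erase v₀).card:ℝ) := by
        rw [hsum, hUcard]
        nlinarith
      obtain ⟨W', hW'sub, hdeg, hc⟩ := ih (W.erase v₀) (Finset.erase_ssubset hv₀W) hhyp
      exact ⟨W', hW'sub.trans (Finset.erase_subset _ _), hdeg, hc⟩

end Graphs


section Graphs
variable {V : Type} [Fintype V] [DecidableEq V] (G : SimpleGraph V) [DecidableRel G.Adj]

lemma inter_eq_filter' (W : Finset V) (v : V) :
    G.neighborFinset v ∩ W = W.filter (fun u => G.Adj v u) := by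
  ext u; simp [SimpleGraph.mem_neighborFinset, and_comm]

lemma sum_swap_deg' (W K : Finset V) :
    ∑ v ∈ W, (G.neighborFinset v ∩ K).card = ∑ u ∈ K, (G.neighborFinset u ∩ W).card := by
  simp only [inter_eq_filter', card_filter]
  rw [Finset.sum_comm]
  refine Finset.sum_congr rfl fun u _ => Finset.sum_congr rfl fun v _ => ?_
  exact if_congr (G.adj_comm v u) rfl rfl

lemma step (q s s' : ℕ) (hq : 1 ≤ q) (hs : 1 ≤ s) (hss' : s ≤ s')
    (ε : ℝ) (hε : 0 < ε) (hs'ε : (s:ℝ) ≤ (s':ℝ) * ε)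
    (W : Finset V)
    (hW : (s'+1) * (q*s' + s * (Nat.choose s' s)^q + 1) ≤ W.card)
    (hdeg : ∀ v ∈ W, ((1:ℝ) - 1/(q:ℝ) + ε) * (W.card:ℝ) ≤ ((G.neighborFinset v ∩ W).card:ℝ))
    (B : Fin q → Finset V) (hBW : ∀ i, B i ⊆ W) (hBcard : ∀ i, (B i).card = s')
    (hBadj : ∀ i j, i ≠ j → ∀ a ∈ B i, ∀ b ∈ B j, G.Adj a b) :
    ∃ A : Fin (q+1) → Finset V, (∀ i, A i ⊆ W) ∧ (∀ i, (A i).card = s) ∧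
      (∀ i j, i ≠ j → ∀ a ∈ A i, ∀ b ∈ A j, G.Adj a b) := by
  classical
  have hdisj : ∀ i j : Fin q, i ≠ j → Disjoint (B i) (B j) := by
    intro i j hij
    rw [Finset.disjoint_left]
    intro a hai haj
    exact G.irrefl (hBadj i j hij a hai a haj)
  set K : Finset V := Finset.univ.biUnion B with hK
  have hKW : K ⊆ W := by
    intro x hx
    rcases Finset.mem_biUnion.1 hx with ⟨i, _, hxi⟩
    exact hBW i hxi
  have hKcard : K.card = q * s' := by
    rw [hK, Finset.card_biUnion (fun i _ j _ hij => hdisj i j hij)]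
    simp [hBcard, Finset.sum_const, Finset.card_univ]
  set Good : Finset V := W.filter (fun v => ∀ i, s ≤ ((G.neighborFinset v) ∩ B i).card)
    with hGood
  have hGoodW : Good ⊆ W := Finset.filter_subset _ _
  have hcount : (q:ℝ) * s' * (((1:ℝ) - 1/(q:ℝ) + ε) * (W.card:ℝ))
      ≤ ∑ v ∈ W, (((G.neighborFinset v ∩ K).card:ℝ)) := by
    have hswap := sum_swap_deg' G W K
    have h2 : ∑ u ∈ K, (((G.neighborFinset u ∩ W).card:ℝ))
        ≥ ∑ _u ∈ K, (((1:ℝ) - 1/(q:ℝ) + ε) * (W.card:ℝ)) :=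
      Finset.sum_le_sum (fun u hu => hdeg u (hKW hu))
    rw [Finset.sum_const, nsmul_eq_mul, hKcard] at h2
    have h3 : ∑ v ∈ W, (((G.neighborFinset v ∩ K).card:ℝ))
        = ∑ u ∈ K, (((G.neighborFinset u ∩ W).card:ℝ)) := by
      exact_mod_cast congrArg (fun k : ℕ => (k:ℝ)) hswap
    rw [h3]
    calc (q:ℝ) * s' * (((1:ℝ) - 1/(q:ℝ) + ε) * (W.card:ℝ))
        = ((q * s' : ℕ):ℝ) * (((1:ℝ) - 1/(q:ℝ) + ε) * (W.card:ℝ)) := by push_cast; ring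
      _ ≤ _ := h2
  have hupper : ∀ v ∈ W, (((G.neighborFinset v ∩ K).card:ℝ))
      ≤ (q:ℝ) * s' - (if v ∈ Good then 0 else ((s':ℝ) - s + 1)) := by
    intro v hv
    by_cases hvG : v ∈ Good
    · rw [if_pos hvG]
      have h1 : (G.neighborFinset v ∩ K).card ≤ K.card := card_le_card inter_subset_right
      rw [hKcard] at h1
      have h2 := (Nat.cast_le (α := ℝ)).2 h1
      push_cast at h2
      linarith
    · rw [if_neg hvG]
      have hvbad : ¬ (∀ i, s ≤ ((G.neighborFinset v) ∩ B i).card) := by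
        intro hcon
        exact hvG (Finset.mem_filter.2 ⟨hv, hcon⟩)
      push_neg at hvbad
      obtain ⟨i₀, hi₀⟩ := hvbad
      have hinter : G.neighborFinset v ∩ K
          = Finset.univ.biUnion (fun i => G.neighborFinset v ∩ B i) := by
        rw [hK]; ext x; simp [mem_biUnion]
      have hcard : (G.neighborFinset v ∩ K).card
          ≤ ∑ i : Fin q, (G.neighborFinset v ∩ B i).card := by
        rw [hinter]; exact Finset.card_biUnion_le
      have hsplit : ∑ i : Fin q, (G.neighborFinset v ∩ B i).card
          = (G.neighborFinset v ∩ B i₀).card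
            + ∑ i ∈ Finset.univ.erase i₀, (G.neighborFinset v ∩ B i).card := by
        rw [← Finset.add_sum_erase _ _ (Finset.mem_univ i₀)]
      have hrest : ∑ i ∈ Finset.univ.erase i₀, (G.neighborFinset v ∩ B i).card
          ≤ (q - 1) * s' := by
        calc ∑ i ∈ Finset.univ.erase i₀, (G.neighborFinset v ∩ B i).card
            ≤ ∑ _i ∈ Finset.univ.erase i₀, s' := by
              refine Finset.sum_le_sum fun i _ => ?_
              calc (G.neighborFinset v ∩ B i).card ≤ (B i).card :=
                    card_le_card inter_subset_right
                _ = s' := hBcard i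
          _ = (q - 1) * s' := by
              rw [Finset.sum_const, smul_eq_mul, Finset.card_erase_of_mem (Finset.mem_univ i₀)]
              simp [Finset.card_univ]
      have htot : (G.neighborFinset v ∩ K).card ≤ (s - 1) + (q - 1) * s' :=
        hcard.trans (hsplit.le.trans (Nat.add_le_add (Nat.le_pred_of_lt hi₀) hrest))
      have hcast := (Nat.cast_le (α := ℝ)).2 htot
      have hq1 : (1:ℝ) ≤ (q:ℝ) := by exact_mod_cast hq
      have hs1 : (1:ℝ) ≤ (s:ℝ) := by exact_mod_cast hs
      have hcastq : ((q - 1 : ℕ):ℝ) = (q:ℝ) - 1 := by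
        rw [Nat.cast_sub hq]; norm_num
      have hcasts : ((s - 1 : ℕ):ℝ) = (s:ℝ) - 1 := by
        rw [Nat.cast_sub hs]; norm_num
      push_cast [hcastq, hcasts] at hcast
      linarith
  -- Good is big
  have hGoodBig : (W.card:ℝ) ≤ ((s':ℝ) + 1) * (Good.card:ℝ) := by
    have hup : ∑ v ∈ W, (((G.neighborFinset v ∩ K).card:ℝ))
        ≤ ∑ v ∈ W, ((q:ℝ) * s' - (if v ∈ Good then 0 else ((s':ℝ) - s + 1))) :=
      Finset.sum_le_sum hupper
    have hite : ∑ v ∈ W, (if v ∈ Good then (0:ℝ) else ((s':ℝ) - s + 1))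
        = ((W.card:ℝ) - (Good.card:ℝ)) * ((s':ℝ) - s + 1) := by
      rw [Finset.sum_ite, Finset.sum_const, Finset.sum_const, smul_zero, nsmul_eq_mul]
      have h1 : W.filter (fun v => v ∉ Good) = W \ Good := by
        ext x; simp [mem_sdiff]
      rw [h1, Finset.card_sdiff_of_subset hGoodW, Nat.cast_sub (card_le_card hGoodW)]
      ring
    have hsplit : ∑ v ∈ W, ((q:ℝ) * s' - (if v ∈ Good then 0 else ((s':ℝ) - s + 1)))
        = (W.card:ℝ) * ((q:ℝ) * s') - ((W.card:ℝ) - (Good.card:ℝ)) * ((s':ℝ) - s + 1) := by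
      rw [Finset.sum_sub_distrib, Finset.sum_const, nsmul_eq_mul, hite]
    rw [hsplit] at hup
    have hmain := hcount.trans hup
    have hqne : (q:ℝ) ≠ 0 := by positivity
    have hinv : (1/(q:ℝ)) * (q:ℝ) = 1 := by field_simp
    have hq1 : (1:ℝ) ≤ (q:ℝ) := by exact_mod_cast hq
    have hWnn : (0:ℝ) ≤ (W.card:ℝ) := Nat.cast_nonneg _
    have hGnn : (0:ℝ) ≤ (Good.card:ℝ) := Nat.cast_nonneg _
    have hss : (s:ℝ) ≤ (s':ℝ) := by exact_mod_cast hss'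
    have hs1 : (1:ℝ) ≤ (s:ℝ) := by exact_mod_cast hs
    -- derive W ≤ (s'-s+1) * Good then conclude
    have hkey : (W.card:ℝ) ≤ ((s':ℝ) - s + 1) * (Good.card:ℝ) := by
      have hexp : (q:ℝ) * s' * (((1:ℝ) - 1/(q:ℝ) + ε) * (W.card:ℝ))
          = (W.card:ℝ) * ((q:ℝ) * s') - (s':ℝ) * (W.card:ℝ)
            + (q:ℝ) * ε * (s':ℝ) * (W.card:ℝ) := by
        field_simp
      rw [hexp] at hmain
      have hqes : (s:ℝ) * (W.card:ℝ) ≤ (q:ℝ) * ε * (s':ℝ) * (W.card:ℝ) := by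
        have h1 : (s:ℝ) ≤ (q:ℝ) * ε * (s':ℝ) := by
          calc (s:ℝ) ≤ (s':ℝ) * ε := hs'ε
            _ = 1 * (ε * s') := by ring
            _ ≤ (q:ℝ) * (ε * s') := by
                apply mul_le_mul_of_nonneg_right hq1
                positivity
            _ = (q:ℝ) * ε * (s':ℝ) := by ring
        exact mul_le_mul_of_nonneg_right h1 hWnn
      nlinarith
    have : ((s':ℝ) - s + 1) * (Good.card:ℝ) ≤ ((s':ℝ) + 1) * (Good.card:ℝ) := by
      apply mul_le_mul_of_nonneg_right _ hGnn
      linarith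
    linarith
  -- Good minus K, pigeonhole over tuples of s-subsets
  set Good' : Finset V := Good \ K with hGood'
  have hGood'W : Good' ⊆ W := (Finset.sdiff_subset).trans hGoodW
  have hG'card : (Good.card:ℝ) - (q:ℝ)*(s':ℝ) ≤ (Good'.card:ℝ) := by
    have h1 : Good ⊆ Good' ∪ K := by
      intro x hx
      by_cases hxK : x ∈ K
      · exact Finset.mem_union_right _ hxK
      · exact Finset.mem_union_left _ (Finset.mem_sdiff.2 ⟨hx, hxK⟩)
    have h2 : Good.card ≤ Good'.card + K.card :=
      (card_le_card h1).trans (Finset.card_union_le _ _)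
    rw [hKcard] at h2
    have := (Nat.cast_le (α := ℝ)).2 h2
    push_cast at this
    linarith
  have hG'big : s * (Nat.choose s' s)^q + 1 ≤ Good'.card := by
    have hWbig : (((s'+1) * (q*s' + s * (Nat.choose s' s)^q + 1) : ℕ) : ℝ) ≤ (W.card:ℝ) :=
      (Nat.cast_le (α := ℝ)).2 hW
    have hs'1 : (0:ℝ) < (s':ℝ) + 1 := by positivity
    have hG : ((q:ℝ)*(s':ℝ) + (s:ℝ) * ((Nat.choose s' s : ℝ))^q + 1) ≤ (Good.card:ℝ) := by
      rw [← mul_le_mul_iff_right₀ hs'1]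
      calc ((s':ℝ)+1) * ((q:ℝ)*(s':ℝ) + (s:ℝ) * ((Nat.choose s' s : ℝ))^q + 1)
          = (((s'+1) * (q*s' + s * (Nat.choose s' s)^q + 1) : ℕ) : ℝ) := by push_cast; ring
        _ ≤ (W.card:ℝ) := hWbig
        _ ≤ ((s':ℝ) + 1) * (Good.card:ℝ) := hGoodBig
    have : ((s:ℝ) * ((Nat.choose s' s : ℝ))^q + 1) ≤ (Good'.card:ℝ) := by linarith
    exact_mod_cast this
  set T := Fintype.piFinset (fun i : Fin q => (B i).powersetCard s) with hT
  have hTcard : T.card = (Nat.choose s' s)^q := by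
    rw [hT, Fintype.card_piFinset]
    simp [Finset.card_powersetCard, hBcard]
  have hcover : Good' ⊆ T.biUnion
      (fun S => Good'.filter (fun v => ∀ i, S i ⊆ G.neighborFinset v)) := by
    intro v hv
    have hvGood : v ∈ Good := (Finset.mem_sdiff.1 hv).1
    have hP : ∀ i, s ≤ ((G.neighborFinset v) ∩ B i).card := (Finset.mem_filter.1 hvGood).2
    have hex : ∀ i : Fin q, ∃ tt, tt ⊆ G.neighborFinset v ∩ B i ∧ tt.card = s := by
      intro i
      obtain ⟨tt, h1, h2⟩ := Finset.exists_subset_card_eq (hP i)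
      exact ⟨tt, h1, h2⟩
    choose S hS1 hS2 using hex
    refine Finset.mem_biUnion.2 ⟨S, ?_, ?_⟩
    · rw [hT, Fintype.mem_piFinset]
      intro i
      exact Finset.mem_powersetCard.2 ⟨(hS1 i).trans inter_subset_right, hS2 i⟩
    · exact Finset.mem_filter.2 ⟨hv, fun i => (hS1 i).trans inter_subset_left⟩
  have hpigeon : ∃ S₀ ∈ T, s ≤ (Good'.filter (fun v => ∀ i, S₀ i ⊆ G.neighborFinset v)).card := by
    by_contra hcon
    push_neg at hcon
    have hle : Good'.card ≤ ∑ S ∈ T, (Good'.filter (fun v => ∀ i, S i ⊆ G.neighborFinset v)).card :=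
      (card_le_card hcover).trans Finset.card_biUnion_le
    have hle2 : ∑ S ∈ T, (Good'.filter (fun v => ∀ i, S i ⊆ G.neighborFinset v)).card
        ≤ ∑ _S ∈ T, (s - 1) :=
      Finset.sum_le_sum (fun S hS => Nat.le_pred_of_lt (hcon S hS))
    rw [Finset.sum_const, smul_eq_mul, hTcard] at hle2
    have hcontr : s * (Nat.choose s' s)^q + 1 ≤ (Nat.choose s' s)^q * (s-1) :=
      le_trans hG'big (hle.trans hle2)
    have hle3 : (Nat.choose s' s)^q * (s-1) ≤ (Nat.choose s' s)^q * s :=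
      Nat.mul_le_mul_left _ (Nat.sub_le _ _)
    have h9 : s * (Nat.choose s' s)^q + 1 ≤ s * (Nat.choose s' s)^q := by
      calc s * (Nat.choose s' s)^q + 1 ≤ (Nat.choose s' s)^q * (s-1) := hcontr
        _ ≤ (Nat.choose s' s)^q * s := hle3
        _ = s * (Nat.choose s' s)^q := Nat.mul_comm _ _
    exact Nat.not_succ_le_self _ h9
  obtain ⟨S₀, hS₀T, hS₀⟩ := hpigeon
  obtain ⟨A₀, hA₀sub, hA₀card⟩ := Finset.exists_subset_card_eq hS₀
  have hS₀mem : ∀ i, S₀ i ⊆ B i ∧ (S₀ i).card = s := by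
    intro i
    have := (Fintype.mem_piFinset.1 (by rw [hT] at hS₀T; exact hS₀T)) i
    exact Finset.mem_powersetCard.1 this
  have hA₀prop : ∀ v ∈ A₀, v ∈ Good' ∧ ∀ i, S₀ i ⊆ G.neighborFinset v := by
    intro v hv
    have := hA₀sub hv
    exact ⟨(Finset.mem_filter.1 this).1, (Finset.mem_filter.1 this).2⟩
  refine ⟨Fin.snoc S₀ A₀, ?_, ?_, ?_⟩
  · intro i
    induction i using Fin.lastCases with
    | last => rw [Fin.snoc_last]; exact hA₀sub.trans ((Finset.filter_subset _ _).trans hGood'W)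
    | cast i => rw [Fin.snoc_castSucc]; exact (hS₀mem i).1.trans ((hBW i))
  · intro i
    induction i using Fin.lastCases with
    | last => rw [Fin.snoc_last]; exact hA₀card
    | cast i => rw [Fin.snoc_castSucc]; exact (hS₀mem i).2
  · intro i j hij a ha b hb
    induction i using Fin.lastCases with
    | last =>
      induction j using Fin.lastCases with
      | last => exact absurd rfl hij
      | cast j =>
        rw [Fin.snoc_last] at ha
        rw [Fin.snoc_castSucc] at hb
        have := (hA₀prop a ha).2 j hb
        exact (SimpleGraph.mem_neighborFinset _ _ _).1 this
    | cast i =>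
      induction j using Fin.lastCases with
      | last =>
        rw [Fin.snoc_castSucc] at ha
        rw [Fin.snoc_last] at hb
        have := (hA₀prop b hb).2 i ha
        exact G.adj_symm ((SimpleGraph.mem_neighborFinset _ _ _).1 this)
      | cast j =>
        rw [Fin.snoc_castSucc] at ha hb
        have hij' : i ≠ j := by
          intro h; exact hij (by rw [h])
        exact hBadj i j hij' a ((hS₀mem i).1 ha) b ((hS₀mem j).1 hb)

end Graphs


section Graphs

lemma sprime_facts (s : ℕ) (hs : 1 ≤ s) (ε : ℝ) (hε : 0 < ε) :
    s ≤ s * (⌈1/ε⌉₊ + 1) ∧ (s:ℝ) ≤ ((s * (⌈1/ε⌉₊ + 1) : ℕ):ℝ) * ε := by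
  constructor
  · exact Nat.le_mul_of_pos_right s (by omega)
  · push_cast
    have h1 : (1:ℝ)/ε ≤ (⌈1/ε⌉₊ : ℝ) := Nat.le_ceil _
    have h2 : (1:ℝ) ≤ ((⌈1/ε⌉₊ : ℝ) + 1) * ε := by
      calc (1:ℝ) = (1/ε) * ε := by field_simp
        _ ≤ ((⌈1/ε⌉₊ : ℝ) + 1) * ε := by
            apply mul_le_mul_of_nonneg_right _ hε.le
            linarith
    calc (s:ℝ) = s * 1 := by ring
      _ ≤ s * (((⌈1/ε⌉₊ : ℝ) + 1) * ε) := by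
          apply mul_le_mul_of_nonneg_left h2 (by positivity)
      _ = (s:ℝ) * ((⌈1/ε⌉₊ : ℝ) + 1) * ε := by ring

theorem erdosStone (r : ℕ) (hr : 1 ≤ r) (s : ℕ) (hs : 1 ≤ s) (ε : ℝ) (hε : 0 < ε) :
    ∃ N : ℕ, ∀ {V : Type} [Fintype V] [DecidableEq V] (G : SimpleGraph V)
      [DecidableRel G.Adj] (W : Finset V), N ≤ W.card →
      (∀ v ∈ W, ((1:ℝ) - 1/(r:ℝ) + ε) * (W.card:ℝ) ≤ ((G.neighborFinset v ∩ W).card:ℝ)) →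
      ∃ A : Fin (r+1) → Finset V, (∀ i, A i ⊆ W) ∧ (∀ i, (A i).card = s) ∧
        (∀ i j, i ≠ j → ∀ a ∈ A i, ∀ b ∈ A j, G.Adj a b) := by
  induction r, hr using Nat.le_induction generalizing s ε with
  | base =>
    set s' := s * (⌈1/ε⌉₊ + 1) with hs'
    obtain ⟨hss', hs'ε⟩ := sprime_facts s hs ε hε
    refine ⟨(s'+1) * (1*s' + s * (Nat.choose s' s)^1 + 1), ?_⟩
    intro V _ _ G _ W hWcard hdeg
    have hs'W : s' ≤ W.card := by
      have : s' ≤ (s'+1) * (1*s' + s * (Nat.choose s' s)^1 + 1) := by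
        have h1 : s' ≤ 1*s' + s * (Nat.choose s' s)^1 + 1 := by omega
        calc s' ≤ 1*s' + s * (Nat.choose s' s)^1 + 1 := h1
          _ ≤ (s'+1) * (1*s' + s * (Nat.choose s' s)^1 + 1) := Nat.le_mul_of_pos_left _ (by omega)
      omega
    obtain ⟨C₀, hC₀sub, hC₀card⟩ := Finset.exists_subset_card_eq hs'W
    have := step G 1 s s' (le_refl 1) hs hss' ε hε hs'ε W hWcard
      (by exact_mod_cast hdeg) (fun _ => C₀) (fun _ => hC₀sub) (fun _ => hC₀card)
      (fun i j hij => absurd (Subsingleton.elim i j) hij)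
    exact this
  | succ r hr ih =>
    set s' := s * (⌈1/ε⌉₊ + 1) with hs'def
    obtain ⟨hss', hs'ε⟩ := sprime_facts s hs ε hε
    have hs'1 : 1 ≤ s' := le_trans hs hss'
    have hr1 : (1:ℝ) ≤ (r:ℝ) := by exact_mod_cast hr
    set εr : ℝ := 1/(r:ℝ) - 1/((r:ℝ)+1) with hεrdef
    have hεr : 0 < εr := by
      rw [hεrdef]
      have h1 : (0:ℝ) < (r:ℝ) := by linarith
      have h2 : (0:ℝ) < (r:ℝ) + 1 := by linarith
      rw [sub_pos, div_lt_div_iff₀ h2 h1]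
      linarith
    obtain ⟨Nr, hNr⟩ := ih s' hs'1 εr hεr
    refine ⟨max Nr ((s'+1) * ((r+1)*s' + s * (Nat.choose s' s)^(r+1) + 1)), ?_⟩
    intro V _ _ G _ W hWcard hdeg
    have hdeg' : ∀ v ∈ W, ((1:ℝ) - 1/(r:ℝ) + εr) * (W.card:ℝ)
        ≤ ((G.neighborFinset v ∩ W).card:ℝ) := by
      intro v hv
      refine le_trans ?_ (hdeg v hv)
      apply mul_le_mul_of_nonneg_right _ (Nat.cast_nonneg _)
      have : ((r:ℕ):ℝ) + 1 = (((r+1):ℕ):ℝ) := by push_cast; ring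
      rw [hεrdef]
      rw [← this]
      linarith [hε]
    obtain ⟨B, hBW, hBcard, hBadj⟩ := hNr G W (le_trans (le_max_left _ _) hWcard) hdeg'
    have hdeg'' : ∀ v ∈ W, ((1:ℝ) - 1/(((r+1):ℕ):ℝ) + ε) * (W.card:ℝ)
        ≤ ((G.neighborFinset v ∩ W).card:ℝ) := hdeg
    exact step G (r+1) s s' (by omega) hs hss' ε hε hs'ε W
      (le_trans (le_max_right _ _) hWcard) hdeg'' B hBW hBcard hBadj

end Graphs


def graphOf (n : ℕ) (G2 : Finset (Finset (Fin n))) : SimpleGraph (Fin n) where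
  Adj x y := x ≠ y ∧ ({x,y} : Finset (Fin n)) ∈ G2
  symm := by
    refine ⟨?_⟩
    intro x y h
    exact ⟨h.1.symm, by rw [Finset.pair_comm]; exact h.2⟩
  loopless := ⟨fun x h => h.1 rfl⟩

instance graphOfDec (n : ℕ) (G2 : Finset (Finset (Fin n))) :
    DecidableRel (graphOf n G2).Adj :=
  fun x y => decidable_of_iff (x ≠ y ∧ ({x,y} : Finset (Fin n)) ∈ G2) Iff.rfl

lemma graphOf_adj {n : ℕ} {G2 : Finset (Finset (Fin n))} {x y : Fin n} :
    (graphOf n G2).Adj x y ↔ x ≠ y ∧ ({x,y} : Finset (Fin n)) ∈ G2 := Iff.rfl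

lemma countD {n : ℕ} (G2 : Finset (Finset (Fin n))) (hE : ∀ e ∈ G2, e.card = 2)
    (W : Finset (Fin n)) :
    ∑ v ∈ W, ((graphOf n G2).neighborFinset v ∩ W).card
      = 2 * (G2.filter (fun e => e ⊆ W)).card := by
  classical
  set G := graphOf n G2 with hG
  have h1 : ∀ v : Fin n, G.neighborFinset v ∩ W = W.filter (fun u => G.Adj v u) := by
    intro v; ext u; simp [SimpleGraph.mem_neighborFinset, and_comm]
  have h2 : ∑ v ∈ W, (G.neighborFinset v ∩ W).card
      = ((W ×ˢ W).filter (fun p => G.Adj p.1 p.2)).card := by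
    rw [Finset.card_filter]
    rw [Finset.sum_product]
    exact Finset.sum_congr rfl fun v _ => by rw [h1 v, Finset.card_filter]
  rw [h2]
  set P := (W ×ˢ W).filter (fun p => G.Adj p.1 p.2) with hP
  have hmaps : ∀ p ∈ P, ({p.1, p.2} : Finset (Fin n)) ∈ G2.filter (fun e => e ⊆ W) := by
    intro p hp
    rw [hP, Finset.mem_filter] at hp
    obtain ⟨hmem, hadj⟩ := hp
    rw [Finset.mem_product] at hmem
    refine Finset.mem_filter.2 ⟨hadj.2, ?_⟩
    intro x hx
    rcases Finset.mem_insert.1 hx with rfl | hx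
    · exact hmem.1
    · rw [Finset.mem_singleton.1 hx]; exact hmem.2
  rw [Finset.card_eq_sum_card_fiberwise hmaps]
  have hfiber : ∀ e ∈ G2.filter (fun e => e ⊆ W),
      (P.filter (fun p => ({p.1, p.2} : Finset (Fin n)) = e)).card = 2 := by
    intro e he
    rw [Finset.mem_filter] at he
    obtain ⟨heG2, heW⟩ := he
    obtain ⟨x, y, hxy, rfl⟩ := Finset.card_eq_two.1 (hE e heG2)
    have hxW : x ∈ W := heW (Finset.mem_insert_self _ _)
    have hyW : y ∈ W := heW (by simp)
    have hset : P.filter (fun p => ({p.1, p.2} : Finset (Fin n)) = {x,y})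
        = {(x,y), (y,x)} := by
      ext p
      constructor
      · intro hp
        rw [Finset.mem_filter, hP, Finset.mem_filter] at hp
        obtain ⟨⟨_, hadj⟩, heq⟩ := hp
        have hne : p.1 ≠ p.2 := hadj.1
        have hp1 : p.1 ∈ ({x,y} : Finset (Fin n)) := by
          rw [← heq]; exact Finset.mem_insert_self _ _
        have hp2 : p.2 ∈ ({x,y} : Finset (Fin n)) := by
          rw [← heq]; simp
        rcases Finset.mem_insert.1 hp1 with h1 | h1
        · have h2 : p.2 = y := by
            rcases Finset.mem_insert.1 hp2 with h2 | h2
            · exact absurd (h2.trans h1.symm) hne.symm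
            · exact Finset.mem_singleton.1 h2
          have : p = (x, y) := Prod.ext h1 h2
          simp [this]
        · rw [Finset.mem_singleton] at h1
          have h2 : p.2 = x := by
            rcases Finset.mem_insert.1 hp2 with h2 | h2
            · exact h2
            · exact absurd ((Finset.mem_singleton.1 h2).trans h1.symm) hne.symm
          have : p = (y, x) := Prod.ext h1 h2
          simp [this]
      · intro hp
        rcases Finset.mem_insert.1 hp with rfl | hp
        · refine Finset.mem_filter.2 ⟨Finset.mem_filter.2 ⟨?_, ?_⟩, rfl⟩
          · exact Finset.mem_product.2 ⟨hxW, hyW⟩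
          · exact ⟨hxy, heG2⟩
        · rw [Finset.mem_singleton] at hp
          subst hp
          refine Finset.mem_filter.2 ⟨Finset.mem_filter.2 ⟨?_, ?_⟩, ?_⟩
          · exact Finset.mem_product.2 ⟨hyW, hxW⟩
          · exact ⟨hxy.symm, by rwa [Finset.pair_comm]⟩
          · exact Finset.pair_comm y x
    rw [hset]
    rw [Finset.card_insert_of_notMem, Finset.card_singleton]
    rw [Finset.mem_singleton]
    intro h
    exact hxy (congrArg Prod.fst h)
  rw [Finset.sum_congr rfl hfiber, Finset.sum_const, smul_eq_mul, Nat.mul_comm]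

lemma G2_le_choose {n : ℕ} (G2 : Finset (Finset (Fin n))) (hE : ∀ e ∈ G2, e.card = 2) :
    G2.card ≤ n.choose 2 := by
  have hsub : G2 ⊆ (Finset.univ : Finset (Fin n)).powersetCard 2 := by
    intro e he
    exact Finset.mem_powersetCard.2 ⟨Finset.subset_univ _, hE e he⟩
  have := Finset.card_le_card hsub
  rwa [Finset.card_powersetCard, Finset.card_univ, Fintype.card_fin] at this

lemma filter_sub_count {n : ℕ} (G2 : Finset (Finset (Fin n))) (hE : ∀ e ∈ G2, e.card = 2)
    (W : Finset (Fin n)) :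
    G2.card + (W.card).choose 2 ≤ (G2.filter (fun e => e ⊆ W)).card + n.choose 2 := by
  classical
  have hsplit : (G2.filter (fun e => e ⊆ W)).card + (G2.filter (fun e => ¬ e ⊆ W)).card
      = G2.card := Finset.card_filter_add_card_filter_not _
  have hbad : (G2.filter (fun e => ¬ e ⊆ W)).card ≤ n.choose 2 - (W.card).choose 2 := by
    have hsub : G2.filter (fun e => ¬ e ⊆ W)
        ⊆ (Finset.univ : Finset (Fin n)).powersetCard 2 \ W.powersetCard 2 := by
      intro e he
      rw [Finset.mem_filter] at he
      refine Finset.mem_sdiff.2 ⟨?_, ?_⟩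
      · exact Finset.mem_powersetCard.2 ⟨Finset.subset_univ _, hE e he.1⟩
      · intro hcon
        exact he.2 (Finset.mem_powersetCard.1 hcon).1
    have hW : W.powersetCard 2 ⊆ (Finset.univ : Finset (Fin n)).powersetCard 2 :=
      Finset.powersetCard_mono (Finset.subset_univ _)
    have := Finset.card_le_card hsub
    rwa [Finset.card_sdiff_of_subset hW, Finset.card_powersetCard, Finset.card_powersetCard,
      Finset.card_univ, Fintype.card_fin] at this
  have hWn : (W.card).choose 2 ≤ n.choose 2 := by
    apply Nat.choose_le_choose
    have := Finset.card_le_card (Finset.subset_univ W)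
    rwa [Finset.card_univ, Fintype.card_fin] at this
  omega



-- axioms standing in for already-proved parts
-- m ≥ 1 from non-2-colorability
lemma one_le_m {m : ℕ} (H2 : SimpleGraph (Fin m)) (hnb : ¬ H2.Colorable 2) : 3 ≤ m := by
  by_contra hcon
  push_neg at hcon
  exact hnb ⟨SimpleGraph.Coloring.mk (fun v => Fin.castLE (by omega) v)
    (fun {a b} hadj => by
      intro h
      exact hadj.ne (Fin.castLE_injective _ h))⟩

set_option maxHeartbeats 1600000 in
lemma upper_bound (m t : ℕ) (ht : 3 ≤ t)
    (E1 : Finset (Fin m)) (E2 : Finset (Finset (Fin m))) (hE2 : ∀ e ∈ E2, e.card = 2)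
    (H2 : SimpleGraph (Fin m))
    (hH2 : ∀ i j, H2.Adj i j ↔ i ≠ j ∧ ({i, j} : Finset (Fin m)) ∈ E2)
    (hnb : ¬ H2.Colorable 2)
    (hchi : H2.chromaticNumber = t) (ε : ℝ) (hε : 0 < ε) :
    ∃ N : ℕ, 2 ≤ N ∧ ∀ n, N ≤ n → ∀ G1 : Finset (Fin n), ∀ G2 : Finset (Finset (Fin n)),
      (∀ e ∈ G2, e.card = 2) →
      (¬ ∃ f : Fin m → Fin n, Function.Injective f ∧
        (∀ i ∈ E1, f i ∈ G1) ∧ (∀ e ∈ E2, e.image f ∈ G2)) →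
      (G1.card : ℝ) / n + (G2.card : ℝ) / (n.choose 2 : ℝ) ≤ 2 - 1/((t:ℝ)-1) + ε := by
  classical
  have hm : 3 ≤ m := one_le_m H2 hnb
  set r : ℕ := t - 1 with hrdef
  have hr2 : 2 ≤ r := by omega
  have hr1 : 1 ≤ r := by omega
  have hrcast : ((r:ℕ):ℝ) = (t:ℝ) - 1 := by
    rw [hrdef, Nat.cast_sub (by omega)]; norm_num
  set c : ℝ := 1/((t:ℝ)-1) with hcdef
  have ht2 : (2:ℝ) ≤ (t:ℝ) - 1 := by
    have : (3:ℝ) ≤ (t:ℝ) := by exact_mod_cast ht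
    linarith
  have hc_pos : 0 < c := by rw [hcdef]; positivity
  have hc_half : c ≤ 1/2 := by
    rw [hcdef]
    rw [div_le_div_iff₀ (by linarith) (by norm_num)]
    linarith
  set ε' : ℝ := min ε c with hε'def
  have hε' : 0 < ε' := lt_min hε hc_pos
  have hε'c : ε' ≤ c := min_le_right _ _
  have hε'ε : ε' ≤ ε := min_le_left _ _
  obtain ⟨NES, hES⟩ := erdosStone r hr1 m (by omega) (ε'/4) (by positivity)
  set K : ℕ := NES + ⌈4/ε'⌉₊ + 1 with hKdef
  set N : ℕ := max 2 (max (⌈8/ε'⌉₊ + 1) ((K+1) * (⌈4/ε'⌉₊ + 1))) with hNdef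
  refine ⟨N, le_max_left _ _, ?_⟩
  intro n hn G1 G2 hG2card hfree
  by_contra hcon
  push_neg at hcon
  -- notation
  set W : Finset (Fin n) := G1 with hWdef
  have hn2 : 2 ≤ n := le_trans (le_max_left _ _) hn
  have hnR : (2:ℝ) ≤ (n:ℝ) := by exact_mod_cast hn2
  have hnpos : (0:ℝ) < n := by linarith only [hnR]
  have hchoose : ((n.choose 2 : ℕ):ℝ) = (n:ℝ) * ((n:ℝ)-1) / 2 := by
    exact Nat.cast_choose_two ℝ n
  have hchoosepos : (0:ℝ) < ((n.choose 2 : ℕ):ℝ) := by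
    rw [hchoose]; nlinarith only [hnR]
  set w : ℝ := (W.card : ℝ) with hwdef
  set g : ℝ := (G2.card : ℝ) with hgdef
  have hwn : w ≤ n := by
    rw [hwdef]
    have : W.card ≤ n := by
      simpa using Finset.card_le_card (Finset.subset_univ W)
    exact_mod_cast this
  have hwnn : 0 ≤ w := Nat.cast_nonneg _
  have hg_le : g ≤ ((n.choose 2:ℕ):ℝ) := by
    rw [hgdef]
    exact_mod_cast G2_le_choose G2 hG2card
  have hmain : 2 - c + ε' < w/n + g/((n.choose 2:ℕ):ℝ) := by
    linarith only [hcon, hε'ε]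
  -- a = w/n
  have hg_lower : (2 - c + ε' - w/n) * ((n.choose 2:ℕ):ℝ) < g := by
    have h1 : (2 - c + ε' - w/n) < g/((n.choose 2:ℕ):ℝ) := by linarith only [hmain]
    calc (2 - c + ε' - w/n) * ((n.choose 2:ℕ):ℝ)
        < (g/((n.choose 2:ℕ):ℝ)) * ((n.choose 2:ℕ):ℝ) := by
          exact mul_lt_mul_of_pos_right h1 hchoosepos
      _ = g := by field_simp
  have ha_lower : 1 - c + ε' ≤ w/n := by
    have h1 : g/((n.choose 2:ℕ):ℝ) ≤ 1 := by
      rw [div_le_one hchoosepos]; exact hg_le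
    have h2 : 2 - c + ε' < w/n + 1 := by linarith only [hmain, h1]
    linarith only [h2]
  -- degree sum bound
  set Gr := graphOf n G2 with hGr
  have hwchoose : ((W.card.choose 2 : ℕ):ℝ) = w * (w-1) / 2 := by
    rw [hwdef]
    exact Nat.cast_choose_two ℝ W.card
  have hDeq : (∑ v ∈ W, ((Gr.neighborFinset v ∩ W).card : ℝ))
      = 2 * ((G2.filter (fun e => e ⊆ W)).card : ℝ) := by
    exact_mod_cast congrArg (fun k : ℕ => (k:ℝ)) (countD G2 hG2card W)
  have hfilter : g + w*(w-1)/2 - (n:ℝ)*((n:ℝ)-1)/2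
      ≤ ((G2.filter (fun e => e ⊆ W)).card : ℝ) := by
    have := filter_sub_count G2 hG2card W
    have hcast : g + ((W.card.choose 2:ℕ):ℝ)
        ≤ ((G2.filter (fun e => e ⊆ W)).card : ℝ) + ((n.choose 2:ℕ):ℝ) := by
      rw [hgdef]
      exact_mod_cast this
    rw [hwchoose, hchoose] at hcast
    linarith only [hcast]
  -- the main quadratic inequality
  set γ : ℝ := 1 - c + ε'/2 with hγdef
  have hγ0 : 0 ≤ γ := by rw [hγdef]; linarith only [hc_half, hε'.le]
  have hγ1 : γ ≤ 1 := by rw [hγdef]; linarith only [hε'c, hε']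
  have hn8 : 8/ε' ≤ (n:ℝ) := by
    have h1 : (⌈8/ε'⌉₊ + 1 : ℕ) ≤ n := le_trans (le_trans (le_max_left _ _) (le_max_right _ _)) hn
    have h2 : (8/ε') ≤ (⌈8/ε'⌉₊ : ℝ) := Nat.le_ceil _
    have h3 : ((⌈8/ε'⌉₊ + 1 : ℕ) : ℝ) ≤ n := by exact_mod_cast h1
    push_cast at h3
    linarith only [h2, h3]
  have hDlow : γ * w * (w - 1) + (ε'/4) * (n:ℝ)^2
      ≤ ∑ v ∈ W, ((Gr.neighborFinset v ∩ W).card : ℝ) := by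
    rw [hDeq]
    have h1 : 2*g + w*(w-1) - (n:ℝ)*((n:ℝ)-1)
        ≤ 2 * ((G2.filter (fun e => e ⊆ W)).card : ℝ) := by linarith only [hfilter]
    have h2 : (2 - c + ε' - w/n) * ((n:ℝ)*((n:ℝ)-1)) < 2*g := by
      have := hg_lower
      rw [hchoose] at this
      linarith only [this]
    -- substitute and crunch: it suffices that
    -- (1 - c + ε' - w/n)*(n*(n-1)) + (1-γ)*w*(w-1) ≥ (ε'/4)*n^2
    have key : (ε'/4) * (n:ℝ)^2
        ≤ (1 - c + ε' - w/n) * ((n:ℝ)*((n:ℝ)-1)) + (1-γ) * (w*(w-1)) := by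
      set a : ℝ := w/n with hadef
      have ha1 : a ≤ 1 := by
        rw [hadef, div_le_one hnpos]; exact hwn
      have ha0 : 1 - c + ε' ≤ a := ha_lower
      have haw : w = a * n := by rw [hadef]; field_simp
      have h1γ : 1 - γ = c - ε'/2 := by rw [hγdef]; ring
      rw [h1γ, haw]
      have hkey2 : (ε'/2) * (n:ℝ)^2 - 2*(n:ℝ)
          ≤ (1 - c + ε' - a) * ((n:ℝ)*((n:ℝ)-1)) + (c - ε'/2) * ((a*n)*(a*n-1)) := by
        have e1 : (1 - c + ε' - a) * ((n:ℝ)*((n:ℝ)-1))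
            = (1 - c + ε' - a) * (n:ℝ)^2 - (1 - c + ε' - a)*(n:ℝ) := by ring
        have e2 : (c - ε'/2) * ((a*n)*(a*n-1))
            = (c - ε'/2) * a^2 * (n:ℝ)^2 - (c - ε'/2)*a*(n:ℝ) := by ring
        have hcp : (0:ℝ) < c := hc_pos
        have b1 : (1 - c + ε' - a) ≤ 1 := by linarith only [ha0, hcp, hε']
        have b3 : 0 ≤ c - ε'/2 := by linarith only [hε'c, hε']
        have ha0' : (0:ℝ) ≤ a := by linarith only [ha0, hc_half, hε']
        have b2 : (c - ε'/2)*a ≤ 1 := mul_le_one₀ (by linarith only [hc_half, hε']) ha0' ha1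
        have hca : c*(1+a) ≤ 1 := by
          calc c*(1+a) ≤ (1/2)*(1+a) :=
                mul_le_mul_of_nonneg_right hc_half (by linarith only [ha0'])
            _ ≤ 1 := by linarith only [ha1]
        have quad : (ε'/2) ≤ (1 - c + ε' - a) + (c - ε'/2) * a^2 := by
          have t1 : (0:ℝ) ≤ (1-a)*(1-c*(1+a)) :=
            mul_nonneg (by linarith only [ha1]) (by linarith only [hca])
          have t2 : (0:ℝ) ≤ (ε'/2)*((1-a)*(1+a)) :=
            mul_nonneg (by linarith only [hε'])
              (mul_nonneg (by linarith only [ha1]) (by linarith only [ha0']))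
          have texp : (1 - c + ε' - a) + (c - ε'/2)*a^2 - ε'/2
              = (1-a)*(1-c*(1+a)) + (ε'/2)*((1-a)*(1+a)) := by ring
          linarith only [t1, t2, texp]
        have m1 : (ε'/2)*(n:ℝ)^2 ≤ ((1 - c + ε' - a) + (c - ε'/2) * a^2) * (n:ℝ)^2 :=
          mul_le_mul_of_nonneg_right quad (sq_nonneg _)
        have m2 : ((1 - c + ε' - a) + (c - ε'/2)*a)*(n:ℝ) ≤ 2*(n:ℝ) :=
          mul_le_mul_of_nonneg_right (by linarith only [b1, b2]) hnpos.le
        have e3 : ((1 - c + ε' - a) + (c - ε'/2) * a^2) * (n:ℝ)^2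
            = (1-c+ε'-a)*(n:ℝ)^2 + (c-ε'/2)*a^2*(n:ℝ)^2 := by ring
        have e4 : ((1 - c + ε' - a) + (c - ε'/2)*a)*(n:ℝ)
            = (1-c+ε'-a)*(n:ℝ) + (c-ε'/2)*a*(n:ℝ) := by ring
        rw [e1, e2]
        rw [e3] at m1
        rw [e4] at m2
        linarith only [m1, m2, e1, e2]
      have hslack : (ε'/4) * (n:ℝ)^2 ≤ (ε'/2) * (n:ℝ)^2 - 2*(n:ℝ) := by
        have : 8 ≤ ε' * (n:ℝ) := by
          have := hn8
          calc (8:ℝ) = (8/ε') * ε' := by field_simp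
            _ ≤ (n:ℝ) * ε' := mul_le_mul_of_nonneg_right hn8 hε'.le
            _ = ε' * n := by ring
        have h8 : 8*(n:ℝ) ≤ (ε'*(n:ℝ))*(n:ℝ) := mul_le_mul_of_nonneg_right this hnpos.le
        have h9 : (ε'*(n:ℝ))*(n:ℝ) = 4*((ε'/4)*(n:ℝ)^2) := by ring
        linarith only [h8, h9]
      linarith only [hkey2, hslack]
    have e3 : (2 - c + ε' - w/n) * ((n:ℝ)*((n:ℝ)-1))
        = (1 - c + ε' - w/n) * ((n:ℝ)*((n:ℝ)-1)) + (n:ℝ)*((n:ℝ)-1) := by ring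
    have e4 : (1-γ) * (w*(w-1)) = w*(w-1) - γ*(w*(w-1)) := by ring
    have e5 : γ * w * (w-1) = γ*(w*(w-1)) := by ring
    linarith only [key, h1, h2, e3, e4, e5]
  -- cleaning
  obtain ⟨W', hW'W, hW'deg, hW'size⟩ := clean Gr γ hγ0 ((ε'/4) * (n:ℝ)^2) W hDlow
  -- W' is large
  have hKbig : (K:ℝ) < (W'.card:ℝ) := by
    by_contra hcontra
    push_neg at hcontra
    have h1 : (W'.card:ℝ) * ((W'.card:ℝ)-1) ≤ (K:ℝ)^2 := by
      nlinarith only [hcontra, Nat.cast_nonneg (α := ℝ) W'.card, Nat.cast_nonneg (α := ℝ) K]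
    have hNn : ((K+1) * (⌈4/ε'⌉₊ + 1) : ℕ) ≤ n :=
      le_trans (le_trans (le_max_right _ _) (le_max_right _ _)) hn
    have hNnR : ((K:ℝ)+1) * ((⌈4/ε'⌉₊:ℝ)+1) ≤ (n:ℝ) := by exact_mod_cast hNn
    have hceil : (4/ε') ≤ ((⌈4/ε'⌉₊:ℝ) + 1) := by
      linarith only [Nat.le_ceil (4/ε')]
    have hceil1 : (1:ℝ) ≤ ((⌈4/ε'⌉₊:ℝ) + 1) := by
      have := Nat.cast_nonneg (α := ℝ) ⌈4/ε'⌉₊; linarith only [this]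
    have hK1 : (0:ℝ) ≤ (K:ℝ) + 1 := by positivity
    have q2 : (0:ℝ) ≤ ((K:ℝ)+1) * ((⌈4/ε'⌉₊:ℝ)+1) := by positivity
    have q3 : (((K:ℝ)+1) * ((⌈4/ε'⌉₊:ℝ)+1))^2 ≤ (n:ℝ)^2 :=
      pow_le_pow_left₀ q2 hNnR 2
    have q4 : ((K:ℝ)+1)^2 * (4/ε') ≤ (((K:ℝ)+1) * ((⌈4/ε'⌉₊:ℝ)+1))^2 := by
      have hsq : (4/ε') ≤ ((⌈4/ε'⌉₊:ℝ)+1)^2 := by nlinarith only [hceil, hceil1]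
      calc ((K:ℝ)+1)^2 * (4/ε') ≤ ((K:ℝ)+1)^2 * (((⌈4/ε'⌉₊:ℝ)+1)^2) :=
            mul_le_mul_of_nonneg_left hsq (by positivity)
        _ = (((K:ℝ)+1) * ((⌈4/ε'⌉₊:ℝ)+1))^2 := by ring
    have q5 : ((K:ℝ)+1)^2 = (ε'/4) * (((K:ℝ)+1)^2 * (4/ε')) := by
      field_simp
    have q6 : (ε'/4) * (((K:ℝ)+1)^2 * (4/ε')) ≤ (ε'/4) * (n:ℝ)^2 :=
      mul_le_mul_of_nonneg_left (q4.trans q3) (by positivity)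
    have q7 : (K:ℝ)^2 < ((K:ℝ)+1)^2 := by
      nlinarith only [Nat.cast_nonneg (α := ℝ) K]
    linarith only [h1, q5, q6, q7, hW'size]
  have hW'NES : NES ≤ W'.card := by
    have h1 : (NES:ℝ) ≤ (K:ℝ) := by
      rw [hKdef]; push_cast; linarith only [Nat.cast_nonneg (α := ℝ) ⌈4/ε'⌉₊]
    have := h1.trans_lt hKbig
    exact_mod_cast this.le
  have hW'4ε : 4/ε' ≤ (W'.card:ℝ) := by
    have h1 : 4/ε' ≤ (K:ℝ) := by
      rw [hKdef]; push_cast; linarith only [Nat.le_ceil (4/ε'), Nat.cast_nonneg (α := ℝ) NES]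
    linarith only [h1, hKbig]
  -- min-degree conversion
  have hdeg2 : ∀ v ∈ W', ((1:ℝ) - 1/((r:ℕ):ℝ) + ε'/4) * (W'.card:ℝ)
      ≤ ((Gr.neighborFinset v ∩ W').card:ℝ) := by
    intro v hv
    have h1 := hW'deg v hv
    have h2 : ((1:ℝ) - 1/((r:ℕ):ℝ) + ε'/4) * (W'.card:ℝ) ≤ γ * ((W'.card:ℝ) - 1) := by
      rw [hrcast, ← hcdef, hγdef]
      have h3 : ε'/4 * (W'.card:ℝ) ≥ 1 := by
        calc (1:ℝ) = (ε'/4) * (4/ε') := by field_simp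
          _ ≤ (ε'/4) * (W'.card:ℝ) := by
              apply mul_le_mul_of_nonneg_left hW'4ε (by positivity)
      nlinarith only [h3, hε', hε'c, Nat.cast_nonneg (α := ℝ) W'.card]
    exact le_trans h2 h1
  obtain ⟨A, hAW', hAcard, hAadj⟩ := hES Gr W' hW'NES hdeg2
  -- build the embedding
  have hco : H2.Colorable t := SimpleGraph.chromaticNumber_le_iff_colorable.1 (le_of_eq hchi)
  obtain C := hco.some
  have hrt : t = r + 1 := by omega
  set C' : Fin m → Fin (r+1) := fun v => Fin.cast hrt (C v) with hC'def
  have hC'valid : ∀ {x y : Fin m}, H2.Adj x y → C' x ≠ C' y := by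
    intro x y hadj hceq
    exact C.valid hadj (by
      have := congrArg (Fin.cast hrt.symm) hceq
      simpa [hC'def] using this)
  set f : Fin m → Fin n := fun v => ((A (C' v)).orderIsoOfFin (hAcard (C' v)) v : Fin n)
    with hfdef
  have hfmem : ∀ v, f v ∈ A (C' v) := fun v => Finset.coe_mem _
  have hfinj : Function.Injective f := by
    intro v u hvu
    by_cases hC : C' v = C' u
    · rw [hfdef] at hvu
      simp only at hvu
      rw [hC] at hvu
      have h1 : ((A (C' u)).orderIsoOfFin (hAcard (C' u)) v)
          = ((A (C' u)).orderIsoOfFin (hAcard (C' u)) u) := Subtype.coe_injective hvu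
      exact ((A (C' u)).orderIsoOfFin (hAcard (C' u))).injective h1
    · exfalso
      have hadj := hAadj (C' v) (C' u) hC (f v) (hfmem v) (f u) (hfmem u)
      rw [hGr, graphOf_adj] at hadj
      exact hadj.1 hvu
  apply hfree
  refine ⟨f, hfinj, ?_, ?_⟩
  · intro i _
    exact hW'W (hAW' (C' i) (hfmem i))
  · intro e he
    obtain ⟨x, y, hxy, rfl⟩ := Finset.card_eq_two.1 (hE2 e he)
    have hadjH : H2.Adj x y := (hH2 x y).2 ⟨hxy, he⟩
    have hCC : C' x ≠ C' y := hC'valid hadjH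
    have hadj := hAadj (C' x) (C' y) hCC (f x) (hfmem x) (f y) (hfmem y)
    rw [hGr, graphOf_adj] at hadj
    have himg : ({x,y} : Finset (Fin m)).image f = {f x, f y} := by
      rw [Finset.image_insert, Finset.image_singleton]
    rw [himg]
    exact hadj.2


lemma lower_bound (m t : ℕ) (ht : 3 ≤ t)
    (E1 : Finset (Fin m)) (E2 : Finset (Finset (Fin m))) (hE2 : ∀ e ∈ E2, e.card = 2)
    (H2 : SimpleGraph (Fin m))
    (hH2 : ∀ i j, H2.Adj i j ↔ i ≠ j ∧ ({i, j} : Finset (Fin m)) ∈ E2)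
    (hchi : H2.chromaticNumber = t) (ε : ℝ) (hε : 0 < ε) :
    ∃ N : ℕ, 2 ≤ N ∧ ∀ n, N ≤ n → ∃ G1 : Finset (Fin n), ∃ G2 : Finset (Finset (Fin n)),
      (∀ e ∈ G2, e.card = 2) ∧
      (¬ ∃ f : Fin m → Fin n, Function.Injective f ∧
        (∀ i ∈ E1, f i ∈ G1) ∧ (∀ e ∈ E2, e.image f ∈ G2)) ∧
      2 - 1/((t:ℝ)-1) - ε ≤ (G1.card : ℝ) / n + (G2.card : ℝ) / (n.choose 2 : ℝ) := by
  classical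
  set r' : ℕ := t - 1 with hr'def
  have hr'2 : 2 ≤ r' := by omega
  have hr'pos : 0 < r' := by omega
  have hr'cast : ((r':ℕ):ℝ) = (t:ℝ) - 1 := by
    rw [hr'def, Nat.cast_sub (by omega)]; norm_num
  set c : ℝ := 1/((t:ℝ)-1) with hcdef
  have ht2 : (2:ℝ) ≤ (t:ℝ) - 1 := by
    have : (3:ℝ) ≤ (t:ℝ) := by exact_mod_cast ht
    linarith
  have hc_pos : 0 < c := by rw [hcdef]; positivity
  have hc1 : c ≤ 1 := by
    rw [hcdef]
    rw [div_le_one (by linarith)]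
    linarith
  refine ⟨max 2 (⌈(3 + ε + (r':ℝ))/ε⌉₊ + 1), le_max_left _ _, ?_⟩
  intro n hn
  have hn2 : 2 ≤ n := le_trans (le_max_left _ _) hn
  have hnR : (2:ℝ) ≤ (n:ℝ) := by exact_mod_cast hn2
  have hnpos : (0:ℝ) < n := by linarith only [hnR]
  set bad : Finset (Finset (Fin n)) := ((Finset.univ : Finset (Fin n)).powersetCard 2).filter
    (fun e => ∀ x ∈ e, ∀ y ∈ e, (x:ℕ) % r' = (y:ℕ) % r') with hbaddef
  set G2T : Finset (Finset (Fin n)) := ((Finset.univ : Finset (Fin n)).powersetCard 2).filter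
    (fun e => ¬ ∀ x ∈ e, ∀ y ∈ e, (x:ℕ) % r' = (y:ℕ) % r') with hG2Tdef
  refine ⟨Finset.univ, G2T, ?_, ?_, ?_⟩
  · intro e he
    rw [hG2Tdef, Finset.mem_filter, Finset.mem_powersetCard] at he
    exact he.1.2
  · -- H-freeness
    rintro ⟨f, hinj, -, hE2img⟩
    have hvalid : ∀ {x y : Fin m}, H2.Adj x y → ((f x : ℕ) % r') ≠ ((f y : ℕ) % r') := by
      intro x y hadj
      obtain ⟨hxy, hmem⟩ := (hH2 x y).1 hadj
      have himg := hE2img _ hmem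
      have heq : ({x, y} : Finset (Fin m)).image f = {f x, f y} := by
        rw [Finset.image_insert, Finset.image_singleton]
      rw [heq, hG2Tdef, Finset.mem_filter] at himg
      have hnall := himg.2
      intro hcon
      apply hnall
      intro a ha b hb
      rcases Finset.mem_insert.1 ha with rfl | ha <;>
        rcases Finset.mem_insert.1 hb with rfl | hb
      · rfl
      · rw [Finset.mem_singleton.1 hb]; exact hcon
      · rw [Finset.mem_singleton.1 ha]; exact hcon.symm
      · rw [Finset.mem_singleton.1 ha, Finset.mem_singleton.1 hb]
    have hcol : H2.Colorable r' := by
      refine ⟨SimpleGraph.Coloring.mk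
        (fun v => (⟨(f v : ℕ) % r', Nat.mod_lt _ hr'pos⟩ : Fin r')) ?_⟩
      intro a b hadj hcon
      exact hvalid hadj (by
        have := congrArg Fin.val hcon
        simpa using this)
    have hle := hcol.chromaticNumber_le
    rw [hchi] at hle
    have : t ≤ r' := by exact_mod_cast hle
    omega
  · -- value bound
    have hnchoose : ((n.choose 2 : ℕ):ℝ) = (n:ℝ)*((n:ℝ)-1)/2 := Nat.cast_choose_two ℝ n
    have hchoosepos : (0:ℝ) < ((n.choose 2 : ℕ):ℝ) := by
      rw [hnchoose]; nlinarith only [hnR]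
    have hsplit : bad.card + G2T.card = n.choose 2 := by
      have := Finset.card_filter_add_card_filter_not
        (s := (Finset.univ : Finset (Fin n)).powersetCard 2)
        (p := fun e => ∀ x ∈ e, ∀ y ∈ e, (x:ℕ) % r' = (y:ℕ) % r')
      rw [Finset.card_powersetCard, Finset.card_univ, Fintype.card_fin] at this
      exact this
    -- bad is small
    have hclass : ∀ i : ℕ, (Finset.univ.filter (fun x : Fin n => (x:ℕ) % r' = i)).card
        ≤ n / r' + 1 := by
      intro i
      have hinj2 : ∀ x ∈ Finset.univ.filter (fun x : Fin n => (x:ℕ) % r' = i),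
          ∀ y ∈ Finset.univ.filter (fun x : Fin n => (x:ℕ) % r' = i),
          (x:ℕ)/r' = (y:ℕ)/r' → x = y := by
        intro x hx y hy hdiv
        rw [Finset.mem_filter] at hx hy
        have h1 := Nat.div_add_mod (x:ℕ) r'
        have h2 := Nat.div_add_mod (y:ℕ) r'
        have : (x:ℕ) = (y:ℕ) := by
          rw [← h1, ← h2, hdiv, hx.2, hy.2]
        exact Fin.ext this
      have hmapsto : ∀ x ∈ Finset.univ.filter (fun x : Fin n => (x:ℕ) % r' = i),
          (x:ℕ)/r' ∈ Finset.range (n / r' + 1) := by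
        intro x _
        rw [Finset.mem_range]
        have : (x:ℕ)/r' ≤ n/r' := Nat.div_le_div_right (le_of_lt x.isLt)
        omega
      have := Finset.card_le_card_of_injOn (fun x : Fin n => (x:ℕ)/r') hmapsto
        (fun x hx y hy h => hinj2 x hx y hy h)
      simpa [Finset.card_range] using this
    have hbadsub : bad ⊆ (Finset.range r').biUnion
        (fun i => (Finset.univ.filter (fun x : Fin n => (x:ℕ) % r' = i)).powersetCard 2) := by
      intro e he
      rw [hbaddef, Finset.mem_filter, Finset.mem_powersetCard] at he
      obtain ⟨⟨-, hcard⟩, hall⟩ := he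
      have hne : e.Nonempty := Finset.card_pos.1 (by omega)
      obtain ⟨x, hx⟩ := hne
      refine Finset.mem_biUnion.2 ⟨(x:ℕ) % r', Finset.mem_range.2 (Nat.mod_lt _ hr'pos), ?_⟩
      refine Finset.mem_powersetCard.2 ⟨?_, hcard⟩
      intro y hy
      rw [Finset.mem_filter]
      exact ⟨Finset.mem_univ _, hall y hy x hx⟩
    have hbadcard : bad.card ≤ r' * ((n/r' + 1).choose 2) := by
      calc bad.card ≤ ∑ i ∈ Finset.range r',
            ((Finset.univ.filter (fun x : Fin n => (x:ℕ) % r' = i)).powersetCard 2).card :=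
          le_trans (Finset.card_le_card hbadsub) Finset.card_biUnion_le
        _ ≤ ∑ _i ∈ Finset.range r', (n/r' + 1).choose 2 := by
            refine Finset.sum_le_sum fun i _ => ?_
            rw [Finset.card_powersetCard]
            exact Nat.choose_le_choose 2 (hclass i)
        _ = r' * ((n/r' + 1).choose 2) := by
            rw [Finset.sum_const, Finset.card_range, smul_eq_mul]
    -- real estimates
    have hMle : ((n/r' + 1 : ℕ):ℝ) ≤ (n:ℝ)/r' + 1 := by
      push_cast
      have := Nat.cast_div_le (α := ℝ) (m := n) (n := r')
      linarith only [this]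
    have hM0 : (0:ℝ) ≤ ((n/r' + 1 : ℕ):ℝ) := Nat.cast_nonneg _
    have hchooseM : (((n/r' + 1).choose 2 : ℕ):ℝ) ≤ ((n:ℝ)/r' + 1)^2 / 2 := by
      rw [Nat.cast_choose_two]
      have h1 : ((n/r' + 1 : ℕ):ℝ) * (((n/r' + 1 : ℕ):ℝ) - 1) ≤ ((n:ℝ)/r' + 1)^2 := by
        have h2 : ((n/r' + 1 : ℕ):ℝ) * (((n/r' + 1 : ℕ):ℝ) - 1)
            ≤ ((n/r' + 1 : ℕ):ℝ) * ((n/r' + 1 : ℕ):ℝ) := by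
          nlinarith only [hM0]
        have h3 : ((n/r' + 1 : ℕ):ℝ) * ((n/r' + 1 : ℕ):ℝ) ≤ ((n:ℝ)/r' + 1)^2 := by
          nlinarith only [hMle, hM0]
        linarith only [h2, h3]
      linarith only [h1]
    have hbadR : (bad.card:ℝ) ≤ (r':ℝ) * (((n:ℝ)/r' + 1)^2 / 2) := by
      have h1 : (bad.card:ℝ) ≤ ((r' * ((n/r' + 1).choose 2) : ℕ):ℝ) := by
        exact_mod_cast hbadcard
      rw [Nat.cast_mul] at h1
      have h2 : ((r':ℕ):ℝ) * (((n/r' + 1).choose 2 : ℕ):ℝ)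
          ≤ (r':ℝ) * (((n:ℝ)/r' + 1)^2 / 2) :=
        mul_le_mul_of_nonneg_left hchooseM (Nat.cast_nonneg _)
      linarith only [h1, h2]
    -- r' * (n/r'+1)^2/2 ≤ (c+ε) * n(n-1)/2 for large n
    have hr'R : (0:ℝ) < (r':ℝ) := by exact_mod_cast hr'pos
    have hcr : c * (r':ℝ) = 1 := by
      rw [hcdef, hr'cast]; field_simp
    have hexp : (r':ℝ) * (((n:ℝ)/r' + 1)^2 / 2)
        = (c * (n:ℝ)^2 + 2*(n:ℝ) + (r':ℝ)) / 2 := by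
      have hr'ne : (r':ℝ) ≠ 0 := ne_of_gt hr'R
      have hc_eq : c = 1/(r':ℝ) := by
        rw [hcdef, hr'cast]
      rw [hc_eq]
      field_simp
      ring
    have hnbig : 3 + ε + (r':ℝ) ≤ ε * (n:ℝ) := by
      have h1 : (⌈(3 + ε + (r':ℝ))/ε⌉₊ + 1 : ℕ) ≤ n := le_trans (le_max_right _ _) hn
      have h2 : ((⌈(3 + ε + (r':ℝ))/ε⌉₊ + 1 : ℕ):ℝ) ≤ (n:ℝ) := by exact_mod_cast h1
      push_cast at h2
      have h3 := Nat.le_ceil ((3 + ε + (r':ℝ))/ε)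
      have h4 : (3 + ε + (r':ℝ))/ε ≤ (n:ℝ) := by linarith only [h2, h3]
      calc 3 + ε + (r':ℝ) = ((3 + ε + (r':ℝ))/ε) * ε := by field_simp
        _ ≤ (n:ℝ) * ε := mul_le_mul_of_nonneg_right h4 hε.le
        _ = ε * (n:ℝ) := by ring
    have hfinal : (c * (n:ℝ)^2 + 2*(n:ℝ) + (r':ℝ)) / 2 ≤ (c+ε) * ((n:ℝ)*((n:ℝ)-1)/2) := by
      have key : c * (n:ℝ)^2 + 2*(n:ℝ) + (r':ℝ) ≤ (c+ε) * ((n:ℝ)*((n:ℝ)-1)) := by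
        have e1 : (c+ε) * ((n:ℝ)*((n:ℝ)-1)) = c*(n:ℝ)^2 + ε*(n:ℝ)^2 - c*(n:ℝ) - ε*(n:ℝ) := by
          ring
        have h5 : ε*(n:ℝ)^2 = (ε*(n:ℝ))*(n:ℝ) := by ring
        have h6 : (3 + ε + (r':ℝ))*(n:ℝ) ≤ (ε*(n:ℝ))*(n:ℝ) :=
          mul_le_mul_of_nonneg_right hnbig hnpos.le
        have h7 : c*(n:ℝ) ≤ (n:ℝ) := by
          calc c*(n:ℝ) ≤ 1*(n:ℝ) := mul_le_mul_of_nonneg_right hc1 hnpos.le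
            _ = (n:ℝ) := by ring
        have h9 : (r':ℝ) ≤ (r':ℝ)*(n:ℝ) := by
          nlinarith only [hr'R, hnR]
        linarith only [e1, h5, h6, h7, h9, hnR]
      linarith only [key]
    -- conclude
    have hG2TR : ((n.choose 2:ℕ):ℝ) - (c+ε) * ((n:ℝ)*((n:ℝ)-1)/2) ≤ (G2T.card:ℝ) := by
      have h1 : (bad.card:ℝ) + (G2T.card:ℝ) = ((n.choose 2:ℕ):ℝ) := by
        exact_mod_cast congrArg (fun k : ℕ => (k:ℝ)) hsplit
      have h2 : (bad.card:ℝ) ≤ (c+ε) * ((n:ℝ)*((n:ℝ)-1)/2) := by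
        rw [hexp] at hbadR
        linarith only [hbadR, hfinal]
      linarith only [h1, h2]
    have hcardU : ((Finset.univ : Finset (Fin n)).card : ℝ) = (n:ℝ) := by
      rw [Finset.card_univ, Fintype.card_fin]
    have h2 : 1 - c - ε ≤ (G2T.card:ℝ) / ((n.choose 2:ℕ):ℝ) := by
      rw [le_div_iff₀ hchoosepos]
      rw [hnchoose] at hG2TR ⊢
      linarith only [hG2TR]
    rw [hcardU]
    have hnn : (n:ℝ)/(n:ℝ) = 1 := by field_simp
    rw [hnn]
    linarith only [h2]


/-- Erdős–Stone–Simonovits for `{1,2}`-graphs: if the 2-level `H²` of a `{1,2}`-graph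
`H` is not bipartite and has chromatic number `t ≥ 3`, then
`π(H) = lim_n max{h_n(G) : G ⊆ K_n^{{1,2}}, G is H-free} = 2 - 1/(t-1)`, where
`h_n(G) = |E(G¹)|/n + |E(G²)|/C(n,2)`. -/
theorem turan_density_one_two (m t : ℕ) (ht : 3 ≤ t)
    (E1 : Finset (Fin m)) (E2 : Finset (Finset (Fin m))) (hE2 : ∀ e ∈ E2, e.card = 2)
    (H2 : SimpleGraph (Fin m))
    (hH2 : ∀ i j, H2.Adj i j ↔ i ≠ j ∧ ({i, j} : Finset (Fin m)) ∈ E2)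
    (hnb : ¬ H2.Colorable 2)
    (hchi : H2.chromaticNumber = t) :
    Tendsto (fun n : ℕ =>
        sSup {v : ℝ | ∃ G1 : Finset (Fin n), ∃ G2 : Finset (Finset (Fin n)),
          (∀ e ∈ G2, e.card = 2) ∧
          (¬ ∃ f : Fin m → Fin n, Function.Injective f ∧
            (∀ i ∈ E1, f i ∈ G1) ∧ (∀ e ∈ E2, e.image f ∈ G2)) ∧
          v = (G1.card : ℝ) / n + (G2.card : ℝ) / (Nat.choose n 2 : ℝ)})
      atTop (nhds (2 - 1 / ((t : ℝ) - 1))) := by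
  have hL1 : 1/((t:ℝ)-1) ≤ 1 := by
    have ht2 : (2:ℝ) ≤ (t:ℝ) - 1 := by
      have : (3:ℝ) ≤ (t:ℝ) := by exact_mod_cast ht
      linarith
    rw [div_le_one (by linarith)]
    linarith
  rw [Metric.tendsto_atTop]
  intro ε hε
  obtain ⟨N1, -, hup⟩ := upper_bound m t ht E1 E2 hE2 H2 hH2 hnb hchi (ε/3) (by positivity)
  obtain ⟨N2, -, hlo⟩ := lower_bound m t ht E1 E2 hE2 H2 hH2 hchi (ε/3) (by positivity)
  refine ⟨max N1 N2, ?_⟩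
  intro n hn
  set S : Set ℝ := {v : ℝ | ∃ G1 : Finset (Fin n), ∃ G2 : Finset (Finset (Fin n)),
    (∀ e ∈ G2, e.card = 2) ∧
    (¬ ∃ f : Fin m → Fin n, Function.Injective f ∧
      (∀ i ∈ E1, f i ∈ G1) ∧ (∀ e ∈ E2, e.image f ∈ G2)) ∧
    v = (G1.card : ℝ) / n + (G2.card : ℝ) / (Nat.choose n 2 : ℝ)} with hSdef
  have hub : ∀ v ∈ S, v ≤ 2 - 1/((t:ℝ)-1) + ε/3 := by
    intro v hv
    obtain ⟨G1, G2, hc, hf, rfl⟩ := hv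
    exact hup n (le_trans (le_max_left _ _) hn) G1 G2 hc hf
  have hbdd : BddAbove S := ⟨2 - 1/((t:ℝ)-1) + ε/3, fun v hv => hub v hv⟩
  obtain ⟨G1, G2, hc, hf, hval⟩ := hlo n (le_trans (le_max_right _ _) hn)
  have hmem : ((G1.card : ℝ) / n + (G2.card : ℝ) / (Nat.choose n 2 : ℝ)) ∈ S :=
    ⟨G1, G2, hc, hf, rfl⟩
  have hsup_le : sSup S ≤ 2 - 1/((t:ℝ)-1) + ε/3 :=
    Real.sSup_le hub (by linarith)
  have hsup_ge : 2 - 1/((t:ℝ)-1) - ε/3 ≤ sSup S :=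
    le_trans hval (le_csSup hbdd hmem)
  rw [Real.dist_eq, abs_lt]
  constructor <;> linarith
end
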